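/- arXiv:1607.01292 — 5 statements merged into one kernel-verified Lean document; each statement's English description precedes it below -/
import Mathlib

section
/- Proposition 2.8 (negative part): if the partition λ is not a rectangle (i.e. not all parts λᵢ are equal), then there exist no d₁, d₂ ∈ ℕ₀ and no sign ε ∈ {1, −1} such that C_λ(x^{−1}, q^{−1}) = ε · x^{−d₁} q^{−d₂} C_λ(x,q) holds in ℤ[x^{±1}, q^{±1}]. -/
open Finset

/-- The letter (`0`-based) at (`0`-based) position `i` of the word `w`;
junk value `0` out of range. -/
def letterAt {N m : ℕ} (w : Fin N → Fin m) (i : ℕ) : ℕ :=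
  if h : i < N then (w ⟨i, h⟩ : ℕ) else 0

/-- Descent set: the `1`-based positions `i ∈ {1,…,N−1}` with `w_i > w_{i+1}`. -/
def desSet {N m : ℕ} (w : Fin N → Fin m) : Finset ℕ :=
  (Finset.Ico 1 N).filter fun i => letterAt w i < letterAt w (i - 1)

/-- Descent number `des`. -/
def des {N m : ℕ} (w : Fin N → Fin m) : ℕ := (desSet w).card

/-- Major index `maj`. -/
def maj {N m : ℕ} (w : Fin N → Fin m) : ℕ := ∑ i ∈ desSet w, i

/-- Multiset permutations: words of length `N` over the alphabet `Fin m` (the letter `i+1`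
of `{1,…,m}` being encoded by `i : Fin m`) in which letter `i` occurs exactly `lam i` times. -/
def multisetPerms (N m : ℕ) (lam : Fin m → ℕ) : Finset (Fin N → Fin m) :=
  Finset.univ.filter fun w => ∀ i, (Finset.univ.filter fun j => w j = i).card = lam i

/-- The monomial `x^a q^b` (with `(a,b) ∈ ℤ²`) in the Laurent polynomial ring `ℤ[x^{±1},q^{±1}]`,
realized as the group algebra `ℤ[ℤ²]`. -/
noncomputable def laurentMonomial (a b : ℤ) (c : ℤ) : AddMonoidAlgebra ℤ (ℤ × ℤ) :=
  AddMonoidAlgebra.single (a, b) c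

/-! ### Auxiliary list machinery -/

/-- Descent number of a list of naturals. -/
def desL (l : List ℕ) : ℕ :=
  ∑ i ∈ Finset.range (l.length - 1), if l.getD (i+1) 0 < l.getD i 0 then 1 else 0

lemma desL_single (a : ℕ) : desL [a] = 0 := rfl

lemma letterAt_eq {N m : ℕ} (w : Fin N → Fin m) (l : List ℕ) (hlen : l.length = N)
    (hl : ∀ i (h : i < N), (w ⟨i, h⟩ : ℕ) = l.getD i 0) (i : ℕ) :
    letterAt w i = l.getD i 0 := by
  unfold letterAt
  split
  · next h => exact hl i h
  · next h => rw [List.getD_eq_default]; omega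

lemma des_eq_desL {N m : ℕ} (w : Fin N → Fin m) (l : List ℕ) (hlen : l.length = N)
    (hl : ∀ i (h : i < N), (w ⟨i, h⟩ : ℕ) = l.getD i 0) : des w = desL l := by
  unfold des desSet desL
  rw [Finset.card_filter, Finset.sum_Ico_eq_sum_range, hlen]
  apply Finset.sum_congr rfl
  intro i _
  rw [letterAt_eq w l hlen hl, letterAt_eq w l hlen hl]
  have : 1 + i - 1 = i := by omega
  rw [this, add_comm 1 i]

lemma maj_eq_zero_of_des {N m : ℕ} (w : Fin N → Fin m) (h : des w = 0) : maj w = 0 := by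
  unfold maj
  rw [Finset.card_eq_zero.mp h]
  simp

lemma count_eq_sum (l : List ℕ) (a : ℕ) :
    l.count a = ∑ j ∈ Finset.range l.length, if l.getD j 0 = a then 1 else 0 := by
  induction l with
  | nil => simp
  | cons b t ih =>
    rw [List.length_cons, Finset.sum_range_succ']
    simp only [List.getD_cons_succ, List.getD_cons_zero, List.count_cons, ih]
    by_cases h : b = a <;> simp [h]

lemma count_eq {N m : ℕ} (w : Fin N → Fin m) (l : List ℕ) (hlen : l.length = N)
    (hl : ∀ i (h : i < N), (w ⟨i, h⟩ : ℕ) = l.getD i 0) (i : Fin m) :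
    (Finset.univ.filter fun j => w j = i).card = l.count (i : ℕ) := by
  rw [count_eq_sum, hlen, Finset.card_filter]
  rw [← Fin.sum_univ_eq_sum_range (fun j => if l.getD j 0 = (i:ℕ) then 1 else 0) N]
  apply Finset.sum_congr rfl
  intro j _
  have := hl j j.isLt
  have hiff : w j = i ↔ l.getD (j : ℕ) 0 = (i : ℕ) := by
    rw [← this]
    constructor
    · intro h; rw [h]
    · intro h; exact Fin.ext h
  by_cases h : w j = i
  · rw [if_pos h, if_pos (hiff.mp h)]
  · rw [if_neg h, if_neg (fun hc => h (hiff.mpr hc))]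

lemma desL_cons (a : ℕ) (t : List ℕ) (ht : t ≠ []) :
    desL (a :: t) = (if t.getD 0 0 < a then 1 else 0) + desL t := by
  unfold desL
  have hlt : 0 < t.length := List.length_pos_iff.mpr ht
  have h1 : (a :: t).length - 1 = (t.length - 1) + 1 := by simp; omega
  rw [h1, Finset.sum_range_succ']
  simp only [List.getD_cons_succ, List.getD_cons_zero]
  rw [add_comm]

lemma desL_append (x y : List ℕ) (hx : x ≠ []) (hy : y ≠ []) :
    desL (x ++ y) = desL x + desL y +
      (if y.getD 0 0 < x.getD (x.length - 1) 0 then 1 else 0) := by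
  induction x with
  | nil => exact absurd rfl hx
  | cons a x ih =>
    cases x with
    | nil =>
      rw [List.singleton_append, desL_cons a y hy, desL_single]
      simp [add_comm]
    | cons b x' =>
      have hbx : (b :: x') ≠ [] := by simp
      have hne : (b :: x') ++ y ≠ [] := by simp
      rw [List.cons_append, desL_cons a ((b :: x') ++ y) hne, ih hbx,
        desL_cons a (b :: x') hbx]
      have h0 : ((b :: x') ++ y).getD 0 0 = b := by
        rw [List.getD_append _ _ _ _ (by simp)]; rfl
      have h2 : (a :: b :: x').getD ((a :: b :: x').length - 1) 0
          = (b :: x').getD ((b :: x').length - 1) 0 := by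
        simp only [List.length_cons]
        rw [show x'.length + 1 + 1 - 1 = (x'.length + 1 - 1) + 1 by omega,
          List.getD_cons_succ]
      rw [h0, h2]
      simp only [List.getD_cons_zero]
      ring

lemma desL_add_count_le (l : List ℕ) : desL l + l.count 0 ≤ l.length := by
  induction l with
  | nil => simp [desL]
  | cons a t ih =>
    rcases eq_or_ne t [] with rfl | ht
    · by_cases h : a = 0 <;> simp [desL, h, List.count_cons]
    · rw [desL_cons a t ht, List.count_cons, List.length_cons]
      simp only [beq_iff_eq]
      by_cases h : a = 0
      · subst h
        rw [if_neg (by omega), if_pos rfl]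
        omega
      · rw [if_neg h]
        have : (if t.getD 0 0 < a then 1 else 0) ≤ 1 := by split <;> omega
        omega

lemma revRange_getD (n i : ℕ) (hi : i < n) :
    ((List.range n).reverse.getD i 0) = n - 1 - i := by
  rw [List.getD_eq_getElem _ _ (by simpa using hi)]
  rw [List.getElem_reverse]
  simp

lemma desL_revRange (n : ℕ) : desL ((List.range n).reverse) = n - 1 := by
  unfold desL
  rw [List.length_reverse, List.length_range]
  have h1 : ∀ i ∈ Finset.range (n-1),
      (if (List.range n).reverse.getD (i+1) 0 < (List.range n).reverse.getD i 0
        then 1 else 0) = 1 := by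
    intro i hi
    have hi' : i < n - 1 := Finset.mem_range.mp hi
    rw [revRange_getD n i (by omega), revRange_getD n (i+1) (by omega), if_pos (by omega)]
  rw [Finset.sum_congr rfl h1, Finset.sum_const, smul_eq_mul, mul_one, Finset.card_range]

lemma revRange_count (n a : ℕ) : (List.range n).reverse.count a = if a < n then 1 else 0 := by
  rw [List.count_reverse]
  split
  · next h => exact List.count_eq_one_of_mem (List.nodup_range (n := n)) (List.mem_range.mpr h)
  · next h => exact List.count_eq_zero_of_not_mem (fun hc => h (List.mem_range.mp hc))

lemma range_count (n a : ℕ) : (List.range n).count a = if a < n then 1 else 0 := by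
  rw [← List.count_reverse, revRange_count]

lemma downset_mem_iff {n : ℕ} (D : Finset (Fin n))
    (hD : ∀ (j j' : Fin n), j' ≤ j → j ∈ D → j' ∈ D) (j : Fin n) :
    j ∈ D ↔ (j : ℕ) < D.card := by
  constructor
  · intro hj
    have h1 : Finset.Iic j ⊆ D := fun j' hj' => hD j j' (Finset.mem_Iic.mp hj') hj
    have h2 := Finset.card_le_card h1
    rw [Fin.card_Iic] at h2
    omega
  · intro hj
    by_contra hjD
    have h2 : D ⊆ Finset.Iio j := by
      intro j' hj'
      rw [Finset.mem_Iio]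
      by_contra hle
      exact hjD (hD j' j (not_lt.mp hle) hj')
    have h3 := Finset.card_le_card h2
    rw [Fin.card_Iio] at h3
    omega

/-- Concatenation of blocks `(c t - 1, …, 1, 0)` for `t` in the list `ts`. -/
def blockL (c : ℕ → ℕ) : List ℕ → List ℕ
  | [] => []
  | t :: ts => (List.range (c t)).reverse ++ blockL c ts

lemma blockL_length (c : ℕ → ℕ) (ts : List ℕ) :
    (blockL c ts).length = (ts.map c).sum := by
  induction ts with
  | nil => rfl
  | cons t ts ih => simp [blockL, ih]

lemma blockL_count (c : ℕ → ℕ) (ts : List ℕ) (a : ℕ) :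
    (blockL c ts).count a = (ts.map fun t => if a < c t then 1 else 0).sum := by
  induction ts with
  | nil => rfl
  | cons t ts ih => simp [blockL, List.count_append, ih, range_count]

lemma blockL_lt (c : ℕ → ℕ) (ts : List ℕ) (M : ℕ) (hM : ∀ t ∈ ts, c t ≤ M) :
    ∀ x ∈ blockL c ts, x < M := by
  induction ts with
  | nil => simp [blockL]
  | cons t ts ih =>
    intro x hx
    rcases List.mem_append.mp hx with h | h
    · have := List.mem_range.mp (List.mem_reverse.mp h)
      have := hM t (by simp)
      omega
    · exact ih (fun t' ht' => hM t' (by simp [ht'])) x h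

lemma blockL_ne_nil (c : ℕ → ℕ) (t : ℕ) (ts : List ℕ) (hc : 1 ≤ c t) :
    blockL c (t :: ts) ≠ [] := by
  simp only [blockL]
  intro h
  rcases List.append_eq_nil_iff.mp h with ⟨h1, _⟩
  rw [List.reverse_eq_nil_iff, List.range_eq_nil] at h1
  omega

lemma blockL_getD_zero (c : ℕ → ℕ) (t : ℕ) (ts : List ℕ) (hc : 1 ≤ c t) :
    (blockL c (t :: ts)).getD 0 0 = c t - 1 := by
  simp only [blockL]
  rw [List.getD_append _ _ _ _ (by simp; omega)]
  exact revRange_getD (c t) 0 (by omega)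

lemma blockL_desL (c : ℕ → ℕ) (ts : List ℕ) (hc : ∀ t ∈ ts, 1 ≤ c t) :
    desL (blockL c ts) = (ts.map fun t => c t - 1).sum := by
  induction ts with
  | nil => rfl
  | cons t ts ih =>
    have hct : 1 ≤ c t := hc t (by simp)
    have hc' : ∀ t' ∈ ts, 1 ≤ c t' := fun t' ht' => hc t' (by simp [ht'])
    cases ts with
    | nil =>
      simp only [blockL, List.append_nil, desL_revRange, List.map_cons, List.map_nil,
        List.sum_cons, List.sum_nil, add_zero]
    | cons t' ts' =>
      have hne : blockL c (t' :: ts') ≠ [] := blockL_ne_nil c t' ts' (hc' t' (by simp))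
      have hrev : (List.range (c t)).reverse ≠ [] := by
        intro h
        rw [List.reverse_eq_nil_iff, List.range_eq_nil] at h
        omega
      rw [show blockL c (t :: t' :: ts') = (List.range (c t)).reverse ++ blockL c (t' :: ts')
        from rfl]
      rw [desL_append _ _ hrev hne, ih hc']
      have hlast : ((List.range (c t)).reverse).getD
          ((List.range (c t)).reverse.length - 1) 0 = 0 := by
        rw [List.length_reverse, List.length_range, revRange_getD (c t) (c t - 1) (by omega)]
        omega
      rw [hlast, if_neg (by omega)]
      simp [List.sum_cons, desL_revRange]

lemma list_sum_range (f : ℕ → ℕ) (n : ℕ) :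
    ((List.range n).map f).sum = ∑ t ∈ Finset.range n, f t := by
  induction n with
  | zero => rfl
  | succ n ih => simp [List.range_succ, Finset.sum_range_succ, ih]

lemma filter_range_lt (n k : ℕ) (h : k ≤ n) :
    (Finset.range n).filter (fun t => t < k) = Finset.range k := by
  ext t
  simp only [Finset.mem_filter, Finset.mem_range]
  omega

/-! ### Monotone words -/

lemma monotone_of_des_eq_zero {N m : ℕ} (w : Fin N → Fin m) (h : des w = 0) : Monotone w := by
  have hempty : desSet w = ∅ := Finset.card_eq_zero.mp h
  have hadj : ∀ (i : ℕ) (h1 : i < N) (h2 : i + 1 < N), w ⟨i, h1⟩ ≤ w ⟨i + 1, h2⟩ := by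
    intro i h1 h2
    by_contra hlt
    have hmem : i + 1 ∈ desSet w := by
      unfold desSet
      rw [Finset.mem_filter, Finset.mem_Ico]
      refine ⟨⟨by omega, h2⟩, ?_⟩
      unfold letterAt
      rw [dif_pos h2, dif_pos (show i + 1 - 1 < N by omega)]
      have : (⟨i + 1 - 1, by omega⟩ : Fin N) = ⟨i, h1⟩ := Fin.mk_eq_mk.mpr (by omega)
      rw [this]
      exact not_le.mp hlt
    rw [hempty] at hmem
    exact absurd hmem (Finset.notMem_empty _)
  have hstep : ∀ (k : ℕ) (j : Fin N) (hk : (j : ℕ) + k < N), w j ≤ w ⟨(j : ℕ) + k, hk⟩ := by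
    intro k
    induction k with
    | zero => intro j hk; simp
    | succ k ih =>
      intro j hk
      have hk' : (j : ℕ) + k < N := by omega
      calc w j ≤ w ⟨(j : ℕ) + k, hk'⟩ := ih j hk'
        _ ≤ w ⟨(j : ℕ) + k + 1, by omega⟩ := hadj _ hk' (by omega)
  intro j j' hle
  have hle' : (j : ℕ) ≤ (j' : ℕ) := hle
  have hj' := j'.isLt
  have heq : (⟨(j : ℕ) + ((j' : ℕ) - (j : ℕ)), by omega⟩ : Fin N) = j' :=
    Fin.ext (by simp; omega)
  have := hstep ((j' : ℕ) - (j : ℕ)) j (by omega)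
  rwa [heq] at this

lemma des_eq_zero_of_monotone {N m : ℕ} (w : Fin N → Fin m) (h : Monotone w) : des w = 0 := by
  unfold des
  rw [Finset.card_eq_zero, Finset.eq_empty_iff_forall_notMem]
  intro i hi
  unfold desSet at hi
  rw [Finset.mem_filter, Finset.mem_Ico] at hi
  obtain ⟨⟨h1, h2⟩, h3⟩ := hi
  unfold letterAt at h3
  rw [dif_pos h2, dif_pos (show i - 1 < N by omega)] at h3
  have : w ⟨i - 1, by omega⟩ ≤ w ⟨i, h2⟩ := h (Fin.mk_le_mk.mpr (by omega))
  have : ((w ⟨i - 1, by omega⟩ : Fin m) : ℕ) ≤ ((w ⟨i, h2⟩ : Fin m) : ℕ) := this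
  omega

lemma monotone_unique {N m : ℕ} (w w' : Fin N → Fin m) (hw : Monotone w) (hw' : Monotone w')
    (hcount : ∀ i, (Finset.univ.filter fun j => w j = i).card
      = (Finset.univ.filter fun j => w' j = i).card) : w = w' := by
  have key : ∀ (v : Fin N → Fin m), Monotone v → ∀ (i : Fin m) (j : Fin N),
      (v j ≤ i ↔ (j : ℕ) < (Finset.univ.filter fun j => v j ≤ i).card) := by
    intro v hv i j
    have hds : ∀ (a b : Fin N), b ≤ a → a ∈ (Finset.univ.filter fun j => v j ≤ i) →
        b ∈ (Finset.univ.filter fun j => v j ≤ i) := by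
      intro a b hba ha
      rw [Finset.mem_filter] at ha ⊢
      exact ⟨Finset.mem_univ _, le_trans (hv hba) ha.2⟩
    have := downset_mem_iff (Finset.univ.filter fun j => v j ≤ i) hds j
    rw [Finset.mem_filter] at this
    simpa using this
  have hcard : ∀ i : Fin m, (Finset.univ.filter fun j => w j ≤ i).card
      = (Finset.univ.filter fun j => w' j ≤ i).card := by
    intro i
    have h1 : ∀ (v : Fin N → Fin m), (Finset.univ.filter fun j => v j ≤ i).card
        = ∑ b ∈ Finset.Iic i, (Finset.univ.filter fun j => v j = b).card := by
      intro v
      rw [Finset.card_eq_sum_card_fiberwise (f := v) (t := Finset.Iic i)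
        (fun j hj => Finset.mem_Iic.mpr (Finset.mem_filter.mp hj).2)]
      apply Finset.sum_congr rfl
      intro b hb
      congr 1
      ext j
      simp only [Finset.mem_filter, Finset.mem_univ, true_and]
      constructor
      · rintro ⟨_, h⟩; exact h
      · rintro h; exact ⟨h ▸ Finset.mem_Iic.mp hb, h⟩
    rw [h1 w, h1 w']
    exact Finset.sum_congr rfl (fun b _ => hcount b)
  funext j
  apply le_antisymm
  · rw [key w hw (w' j) j, hcard]
    exact (key w' hw' (w' j) j).mp le_rfl
  · rw [key w' hw' (w j) j, ← hcard]
    exact (key w hw (w j) j).mp le_rfl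

/-! ### Words from lists, sorting -/

/-- The word associated to a list. -/
def wd {N m : ℕ} (l : List ℕ) (hlen : l.length = N) (hm : ∀ x ∈ l, x < m) :
    Fin N → Fin m := fun j =>
  ⟨l.getD (j : ℕ) 0, by
    rw [List.getD_eq_getElem l 0 (by omega)]
    exact hm _ (List.getElem_mem _)⟩

lemma wd_spec {N m : ℕ} (l : List ℕ) (hlen : l.length = N) (hm : ∀ x ∈ l, x < m) :
    ∀ i (h : i < N), ((wd l hlen hm) ⟨i, h⟩ : ℕ) = l.getD i 0 := fun _ _ => rfl

lemma count_comp_perm {N m : ℕ} (w : Fin N → Fin m) (σ : Equiv.Perm (Fin N)) (i : Fin m) :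
    (Finset.univ.filter fun j => w (σ j) = i).card
      = (Finset.univ.filter fun j => w j = i).card := by
  apply Finset.card_bij (fun j _ => σ j)
  · intro a ha
    rw [Finset.mem_filter] at ha ⊢
    exact ⟨Finset.mem_univ _, ha.2⟩
  · intro a _ b _ hab
    exact σ.injective hab
  · intro b hb
    refine ⟨σ.symm b, ?_, by simp⟩
    rw [Finset.mem_filter] at hb ⊢
    refine ⟨Finset.mem_univ _, ?_⟩
    rw [Equiv.apply_symm_apply]
    exact hb.2

lemma sorted_exists {N m : ℕ} (lam : Fin m → ℕ) (w : Fin N → Fin m)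
    (hw : w ∈ multisetPerms N m lam) :
    ∃ s ∈ multisetPerms N m lam, Monotone s := by
  refine ⟨w ∘ Tuple.sort w, ?_, Tuple.monotone_sort w⟩
  unfold multisetPerms at hw ⊢
  rw [Finset.mem_filter] at hw ⊢
  refine ⟨Finset.mem_univ _, fun i => ?_⟩
  simp only [Function.comp_apply]
  rw [count_comp_perm w (Tuple.sort w) i]
  exact hw.2 i

/-! ### Algebra -/

lemma sum_single_apply {α : Type*} [DecidableEq α] (S : Finset α) (g : α → ℤ × ℤ) (p : ℤ × ℤ) :
    (∑ w ∈ S, AddMonoidAlgebra.single (g w) (1 : ℤ)).coeff p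
      = ((S.filter fun w => g w = p).card : ℤ) := by
  classical
  rw [AddMonoidAlgebra.coeff_sum, Finset.sum_apply', Finset.card_filter, Nat.cast_sum]
  apply Finset.sum_congr rfl
  intro w _
  rw [AddMonoidAlgebra.coeff_single_apply]
  split <;> simp

set_option maxHeartbeats 1000000

/-- **Proposition 2.8 (negative part)**: if the partition `λ` is not a rectangle, then there
are no `d₁, d₂ ∈ ℕ₀` and no sign `ε ∈ {1,−1}` with
`C_λ(x^{−1},q^{−1}) = ε · x^{−d₁} q^{−d₂} C_λ(x,q)` in `ℤ[x^{±1},q^{±1}]`. -/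
theorem no_functional_equation_of_not_rectangle (m N : ℕ) (lam : Fin m → ℕ)
    (hanti : Antitone lam) (hpos : ∀ i, 1 ≤ lam i) (hN : N = ∑ i, lam i)
    (hnotrect : ¬ ∀ i j, lam i = lam j) :
    ¬ ∃ (d₁ d₂ : ℕ) (ε : ℤ), (ε = 1 ∨ ε = -1) ∧
      ∑ w ∈ multisetPerms N m lam,
          laurentMonomial (-(des w : ℤ)) (-(maj w : ℤ)) 1 =
        laurentMonomial (-(d₁ : ℤ)) (-(d₂ : ℤ)) ε *
          ∑ w ∈ multisetPerms N m lam,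
            laurentMonomial (des w : ℤ) (maj w : ℤ) 1 := by
  rintro ⟨d₁, d₂, ε, hε, heq⟩
  classical
  -- basic setup
  have hm0 : 0 < m := by
    rcases Nat.eq_zero_or_pos m with hm | hm
    · exact absurd (fun i j => by subst hm; exact i.elim0) hnotrect
    · exact hm
  set i0 : Fin m := ⟨0, hm0⟩ with hi0
  set L : ℕ := lam i0 with hLdef
  have hL1 : 1 ≤ L := hpos i0
  have hlamle : ∀ i, lam i ≤ L := fun i => hanti (Fin.le_def.mpr (Nat.zero_le _))
  have hex : ∃ i1, lam i1 < L := by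
    by_contra hno
    push_neg at hno
    apply hnotrect
    intro i j
    have h1 : lam i = L := le_antisymm (hlamle i) (hno i)
    have h2 : lam j = L := le_antisymm (hlamle j) (hno j)
    rw [h1, h2]
  obtain ⟨i1, hi1⟩ := hex
  have hm2 : 2 ≤ m := by
    have h1 : (i1 : ℕ) ≠ 0 := by
      intro h
      have h2 : i1 = i0 := Fin.ext h
      rw [h2] at hi1
      omega
    have := i1.isLt
    omega
  -- column counts of the conjugate partition
  set c : ℕ → ℕ := fun t => (Finset.univ.filter fun i : Fin m => t < lam i).card with hcdef
  have hcmem : ∀ (t : ℕ) (i : Fin m), t < lam i ↔ (i : ℕ) < c t := by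
    intro t i
    have hds : ∀ (a b : Fin m), b ≤ a →
        a ∈ (Finset.univ.filter fun i => t < lam i) →
        b ∈ (Finset.univ.filter fun i => t < lam i) := by
      intro a b hba ha
      rw [Finset.mem_filter] at ha ⊢
      exact ⟨Finset.mem_univ _, lt_of_lt_of_le ha.2 (hanti hba)⟩
    have h := downset_mem_iff (Finset.univ.filter fun i : Fin m => t < lam i) hds i
    rw [Finset.mem_filter] at h
    simpa using h
  have hc1 : ∀ t, t < L → 1 ≤ c t := by
    intro t ht
    have h := (hcmem t i0).mp (by rw [← hLdef]; exact ht)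
    omega
  have hcm : ∀ t, c t ≤ m := by
    intro t
    calc c t ≤ Finset.univ.card := Finset.card_filter_le _ _
      _ = m := by simp
  have hc0m : c 0 = m := by
    have h : (Finset.univ.filter fun i : Fin m => 0 < lam i) = Finset.univ :=
      Finset.filter_true_of_mem (fun i _ => hpos i)
    rw [hcdef]
    simp only
    rw [h]
    simp
  have hcL : c (L - 1) < m := by
    have hnot : i1 ∉ (Finset.univ.filter fun i : Fin m => L - 1 < lam i) := by
      rw [Finset.mem_filter]
      rintro ⟨-, h⟩
      omega
    have hsub : (Finset.univ.filter fun i : Fin m => L - 1 < lam i)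
        ⊆ Finset.univ.erase i1 := by
      intro x hx
      rw [Finset.mem_erase]
      exact ⟨fun h => hnot (h ▸ hx), Finset.mem_univ _⟩
    calc c (L - 1) ≤ (Finset.univ.erase i1).card := Finset.card_le_card hsub
      _ = m - 1 := by rw [Finset.card_erase_of_mem (Finset.mem_univ _)]; simp
      _ < m := by omega
  have hcsum : ∑ t ∈ Finset.range L, c t = N := by
    have h1 : ∀ t, c t = ∑ i : Fin m, if t < lam i then 1 else 0 := by
      intro t
      rw [hcdef]
      simp only
      rw [Finset.card_filter]
    calc ∑ t ∈ Finset.range L, c t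
        = ∑ t ∈ Finset.range L, ∑ i : Fin m, if t < lam i then 1 else 0 :=
          Finset.sum_congr rfl (fun t _ => h1 t)
      _ = ∑ i : Fin m, ∑ t ∈ Finset.range L, if t < lam i then 1 else 0 := Finset.sum_comm
      _ = ∑ i : Fin m, lam i := by
          apply Finset.sum_congr rfl
          intro i _
          rw [← Finset.card_filter, filter_range_lt L (lam i) (hlamle i), Finset.card_range]
      _ = N := hN.symm
  -- the two maximizing words
  set lu : List ℕ := blockL c (List.range L) with hludef
  set lv : List ℕ := blockL c ((L - 1) :: List.range (L - 1)) with hlvdef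
  have hlulen : lu.length = N := by
    rw [hludef, blockL_length, list_sum_range, hcsum]
  have hsplit : c (L - 1) + ∑ t ∈ Finset.range (L - 1), c t = ∑ t ∈ Finset.range L, c t := by
    have h := Finset.sum_range_succ c (L - 1)
    rw [show L - 1 + 1 = L by omega] at h
    rw [h]
    ring
  have hlvlen : lv.length = N := by
    rw [hlvdef, blockL_length]
    simp only [List.map_cons, List.sum_cons]
    rw [list_sum_range, hsplit, hcsum]
  have hlum : ∀ x ∈ lu, x < m := by
    rw [hludef]; exact blockL_lt c _ m (fun t _ => hcm t)
  have hlvm : ∀ x ∈ lv, x < m := by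
    rw [hlvdef]; exact blockL_lt c _ m (fun t _ => hcm t)
  set u : Fin N → Fin m := wd lu hlulen hlum with hudef
  set v : Fin N → Fin m := wd lv hlvlen hlvm with hvdef
  -- counts of the two words
  have hcount_list : ∀ (i : Fin m) (ts : List ℕ),
      (ts.map fun t => if (i : ℕ) < c t then 1 else 0).sum
        = (ts.map fun t => if t < lam i then 1 else 0).sum := by
    intro i ts
    congr 1
    exact List.map_congr_left (fun t _ => if_congr (hcmem t i).symm rfl rfl)
  have hcountL : ∀ i : Fin m,
      ∑ t ∈ Finset.range L, (if t < lam i then 1 else 0) = lam i := by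
    intro i
    rw [← Finset.card_filter, filter_range_lt L (lam i) (hlamle i), Finset.card_range]
  have hucount : ∀ i : Fin m, lu.count (i : ℕ) = lam i := by
    intro i
    rw [hludef, blockL_count, hcount_list i, list_sum_range, hcountL]
  have hvcount : ∀ i : Fin m, lv.count (i : ℕ) = lam i := by
    intro i
    rw [hlvdef, blockL_count]
    simp only [List.map_cons, List.sum_cons]
    rw [show (if (i : ℕ) < c (L - 1) then 1 else 0)
        = (if L - 1 < lam i then 1 else 0) from if_congr (hcmem (L - 1) i).symm rfl rfl]
    rw [hcount_list i, list_sum_range]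
    have h2 := Finset.sum_range_succ (fun t => if t < lam i then 1 else 0) (L - 1)
    rw [show L - 1 + 1 = L by omega] at h2
    have h3 := hcountL i
    omega
  have humem : u ∈ multisetPerms N m lam := by
    unfold multisetPerms
    rw [Finset.mem_filter]
    refine ⟨Finset.mem_univ _, fun i => ?_⟩
    rw [hudef, count_eq (wd lu hlulen hlum) lu hlulen (wd_spec lu hlulen hlum) i, hucount i]
  have hvmem : v ∈ multisetPerms N m lam := by
    unfold multisetPerms
    rw [Finset.mem_filter]
    refine ⟨Finset.mem_univ _, fun i => ?_⟩
    rw [hvdef, count_eq (wd lv hlvlen hlvm) lv hlvlen (wd_spec lv hlvlen hlvm) i, hvcount i]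
  -- descent numbers of the two words
  have hdessum : ∑ t ∈ Finset.range L, (c t - 1) = N - L := by
    have h1 : ∑ t ∈ Finset.range L, (c t - 1 + 1) = ∑ t ∈ Finset.range L, c t :=
      Finset.sum_congr rfl (fun t ht => by
        have := hc1 t (Finset.mem_range.mp ht)
        omega)
    rw [Finset.sum_add_distrib] at h1
    simp only [Finset.sum_const, Finset.card_range, smul_eq_mul, mul_one] at h1
    omega
  have hdesu : des u = N - L := by
    rw [hudef, des_eq_desL (wd lu hlulen hlum) lu hlulen (wd_spec lu hlulen hlum), hludef,
      blockL_desL c _ (fun t ht => hc1 t (List.mem_range.mp ht)), list_sum_range, hdessum]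
  have hdesv : des v = N - L := by
    have hcv : ∀ t ∈ (L - 1) :: List.range (L - 1), 1 ≤ c t := by
      intro t ht
      rcases List.mem_cons.mp ht with rfl | h
      · exact hc1 _ (by omega)
      · exact hc1 t (by have := List.mem_range.mp h; omega)
    rw [hvdef, des_eq_desL (wd lv hlvlen hlvm) lv hlvlen (wd_spec lv hlvlen hlvm), hlvdef,
      blockL_desL c _ hcv, List.map_cons, List.sum_cons, list_sum_range]
    have h2 := Finset.sum_range_succ (fun t => c t - 1) (L - 1)
    rw [show L - 1 + 1 = L by omega] at h2
    omega
  -- maximality of the descent number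
  have hmax : ∀ w ∈ multisetPerms N m lam, des w ≤ N - L := by
    intro w hw
    set l : List ℕ := List.ofFn (fun j => (w j : ℕ)) with hldef
    have hlen : l.length = N := by rw [hldef, List.length_ofFn]
    have hl : ∀ i (h : i < N), (w ⟨i, h⟩ : ℕ) = l.getD i 0 := by
      intro i h
      rw [hldef, List.getD_eq_getElem _ _ (by rw [List.length_ofFn]; exact h),
        List.getElem_ofFn]
    have hcnt := count_eq w l hlen hl i0
    unfold multisetPerms at hw
    rw [Finset.mem_filter] at hw
    have hfib := hw.2 i0
    rw [hcnt] at hfib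
    have hfib' : l.count 0 = L := hfib
    have hb := desL_add_count_le l
    have hdl : des w = desL l := des_eq_desL w l hlen hl
    rw [hlen] at hb
    omega
  -- the two words are distinct
  have hN0 : 0 < N := by
    have h := Finset.single_le_sum (f := lam) (fun i _ => Nat.zero_le _) (Finset.mem_univ i0)
    rw [← hLdef, ← hN] at h
    omega
  have hval_u : ((u ⟨0, hN0⟩ : Fin m) : ℕ) = m - 1 := by
    rw [hudef]
    rw [wd_spec lu hlulen hlum 0 hN0, hludef]
    have hLcons : List.range L = 0 :: ((List.range (L - 1)).map Nat.succ) := by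
      conv_lhs => rw [show L = (L - 1) + 1 by omega]
      rw [List.range_succ_eq_map]
    rw [hLcons, blockL_getD_zero c 0 _ (by rw [hc0m]; omega), hc0m]
  have hval_v : ((v ⟨0, hN0⟩ : Fin m) : ℕ) = c (L - 1) - 1 := by
    rw [hvdef]
    rw [wd_spec lv hlvlen hlvm 0 hN0, hlvdef,
      blockL_getD_zero c (L - 1) _ (hc1 _ (by omega))]
  have hne : u ≠ v := by
    intro h
    have h2 : ((u ⟨0, hN0⟩ : Fin m) : ℕ) = ((v ⟨0, hN0⟩ : Fin m) : ℕ) := by rw [h]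
    rw [hval_u, hval_v] at h2
    have h3 := hc1 (L - 1) (by omega)
    omega
  -- the unique sorted word
  obtain ⟨s, hsmem, hsmono⟩ := sorted_exists lam u humem
  have hsdes : des s = 0 := des_eq_zero_of_monotone s hsmono
  have huniq : ∀ w ∈ multisetPerms N m lam, des w = 0 → w = s := by
    intro w hw hw0
    apply monotone_unique w s (monotone_of_des_eq_zero w hw0) hsmono
    intro i
    unfold multisetPerms at hw hsmem
    rw [Finset.mem_filter] at hw hsmem
    rw [hw.2 i, hsmem.2 i]
  -- the coefficient identity
  have key : ∀ a b : ℕ,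
      (((multisetPerms N m lam).filter fun w =>
          ((des w : ℤ), (maj w : ℤ)) = ((a : ℤ), (b : ℤ))).card : ℤ)
        = ε * (((multisetPerms N m lam).filter fun w =>
            ((des w : ℤ), (maj w : ℤ)) = ((d₁ : ℤ) - a, (d₂ : ℤ) - b)).card : ℤ) := by
    intro a b
    have h := congrArg (fun f : AddMonoidAlgebra ℤ (ℤ × ℤ) => f.coeff ((-(a : ℤ), -(b : ℤ)))) heq
    unfold laurentMonomial at h
    rw [AddMonoidAlgebra.coeff_single_mul_apply] at h
    rw [sum_single_apply (multisetPerms N m lam)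
      (fun w => (-(des w : ℤ), -(maj w : ℤ))) ((-(a : ℤ), -(b : ℤ)))] at h
    rw [sum_single_apply (multisetPerms N m lam)
      (fun w => ((des w : ℤ), (maj w : ℤ)))
      (-(-(d₁ : ℤ), -(d₂ : ℤ)) + (-(a : ℤ), -(b : ℤ)))] at h
    have hpt : (-(-(d₁ : ℤ), -(d₂ : ℤ)) + (-(a : ℤ), -(b : ℤ)))
        = ((d₁ : ℤ) - a, (d₂ : ℤ) - b) := by
      simp only [Prod.neg_mk, Prod.mk_add_mk, Prod.mk.injEq]
      constructor <;> ring
    rw [hpt] at h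
    have hfl : ((multisetPerms N m lam).filter fun w =>
        (-(des w : ℤ), -(maj w : ℤ)) = (-(a : ℤ), -(b : ℤ)))
        = ((multisetPerms N m lam).filter fun w =>
          ((des w : ℤ), (maj w : ℤ)) = ((a : ℤ), (b : ℤ))) := by
      apply Finset.filter_congr
      intro w _
      simp [Prod.ext_iff]
    rw [hfl] at h
    exact h
  -- coefficient at (0,0) is 1
  have hG00 : ((multisetPerms N m lam).filter fun w =>
      ((des w : ℤ), (maj w : ℤ)) = ((0 : ℤ), (0 : ℤ))).card = 1 := by
    rw [Finset.card_eq_one]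
    refine ⟨s, ?_⟩
    ext w
    rw [Finset.mem_filter, Finset.mem_singleton]
    constructor
    · rintro ⟨hw, hw2⟩
      rw [Prod.mk.injEq] at hw2
      have hd : des w = 0 := by exact_mod_cast hw2.1
      exact huniq w hw hd
    · intro hws
      rw [hws]
      refine ⟨hsmem, ?_⟩
      rw [Prod.mk.injEq]
      refine ⟨by exact_mod_cast hsdes, by exact_mod_cast maj_eq_zero_of_des s hsdes⟩
  have hk00 := key 0 0
  rw [Nat.cast_zero, sub_zero, sub_zero, hG00, Nat.cast_one] at hk00
  -- the sign must be +1
  have hε1 : ε = 1 := by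
    rcases hε with rfl | rfl
    · rfl
    · exfalso
      have h2 : (0 : ℤ) ≤ (((multisetPerms N m lam).filter fun w =>
          ((des w : ℤ), (maj w : ℤ)) = ((d₁ : ℤ), (d₂ : ℤ))).card : ℤ) := Nat.cast_nonneg _
      omega
  subst hε1
  simp only [one_mul] at key hk00
  have hGd : ((multisetPerms N m lam).filter fun w =>
      ((des w : ℤ), (maj w : ℤ)) = ((d₁ : ℤ), (d₂ : ℤ))).card = 1 := by
    exact_mod_cast hk00.symm
  -- witness extraction
  have hwitness : ∀ x y : ℤ, 0 < ((multisetPerms N m lam).filter fun w =>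
      ((des w : ℤ), (maj w : ℤ)) = (x, y)).card →
      ∃ w ∈ multisetPerms N m lam, (des w : ℤ) = x ∧ (maj w : ℤ) = y := by
    intro x y hr
    obtain ⟨w, hw⟩ := Finset.card_pos.mp hr
    rw [Finset.mem_filter] at hw
    have h2 := hw.2
    rw [Prod.mk.injEq] at h2
    exact ⟨w, hw.1, h2.1, h2.2⟩
  -- analyze the reflection of u
  have hcard_u : 0 < ((multisetPerms N m lam).filter fun w =>
      ((des w : ℤ), (maj w : ℤ)) = ((des u : ℤ), (maj u : ℤ))).card :=
    Finset.card_pos.mpr ⟨u, Finset.mem_filter.mpr ⟨humem, rfl⟩⟩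
  have hk_u := key (des u) (maj u)
  have hdual_u : 0 < ((multisetPerms N m lam).filter fun w =>
      ((des w : ℤ), (maj w : ℤ)) = ((d₁ : ℤ) - (des u : ℕ), (d₂ : ℤ) - (maj u : ℕ))).card := by
    by_contra hzero
    push_neg at hzero
    have h0 : ((multisetPerms N m lam).filter fun w =>
        ((des w : ℤ), (maj w : ℤ)) = ((d₁ : ℤ) - (des u : ℕ), (d₂ : ℤ) - (maj u : ℕ))).card
        = 0 := by omega
    rw [h0] at hk_u
    simp only [Nat.cast_zero] at hk_u
    omega
  obtain ⟨w₁, hw₁mem, hw₁d, hw₁m⟩ := hwitness _ _ hdual_u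
  obtain ⟨w₂, hw₂mem, hw₂d, hw₂m⟩ := hwitness _ _ (by rw [hGd]; omega)
  have hw₂le : des w₂ ≤ N - L := hmax w₂ hw₂mem
  have hd₁ : (d₁ : ℤ) = (des u : ℤ) := by
    have h1 : (0 : ℤ) ≤ (d₁ : ℤ) - (des u : ℤ) := by
      rw [← hw₁d]
      positivity
    have h2 : (d₁ : ℤ) ≤ (des u : ℤ) := by
      rw [← hw₂d]
      have : des w₂ ≤ des u := by omega
      exact_mod_cast this
    omega
  have hdesw₁ : des w₁ = 0 := by
    have h : (des w₁ : ℤ) = 0 := by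
      rw [hw₁d, hd₁]
      ring
    exact_mod_cast h
  have hmaju : (maj u : ℤ) = (d₂ : ℤ) := by
    have h := maj_eq_zero_of_des w₁ hdesw₁
    rw [h] at hw₁m
    simp only [Nat.cast_zero] at hw₁m
    omega
  -- analyze the reflection of v
  have hcard_v : 0 < ((multisetPerms N m lam).filter fun w =>
      ((des w : ℤ), (maj w : ℤ)) = ((des v : ℤ), (maj v : ℤ))).card :=
    Finset.card_pos.mpr ⟨v, Finset.mem_filter.mpr ⟨hvmem, rfl⟩⟩
  have hk_v := key (des v) (maj v)
  have hdual_v : 0 < ((multisetPerms N m lam).filter fun w =>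
      ((des w : ℤ), (maj w : ℤ)) = ((d₁ : ℤ) - (des v : ℕ), (d₂ : ℤ) - (maj v : ℕ))).card := by
    by_contra hzero
    push_neg at hzero
    have h0 : ((multisetPerms N m lam).filter fun w =>
        ((des w : ℤ), (maj w : ℤ)) = ((d₁ : ℤ) - (des v : ℕ), (d₂ : ℤ) - (maj v : ℕ))).card
        = 0 := by omega
    rw [h0] at hk_v
    simp only [Nat.cast_zero] at hk_v
    omega
  obtain ⟨w₃, hw₃mem, hw₃d, hw₃m⟩ := hwitness _ _ hdual_v
  have hdesw₃ : des w₃ = 0 := by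
    have hdveq : (des v : ℤ) = (des u : ℤ) := by
      rw [hdesu, hdesv]
    have h : (des w₃ : ℤ) = 0 := by
      rw [hw₃d, hdveq, hd₁]
      ring
    exact_mod_cast h
  have hmajv : (maj v : ℤ) = (d₂ : ℤ) := by
    have h := maj_eq_zero_of_des w₃ hdesw₃
    rw [h] at hw₃m
    simp only [Nat.cast_zero] at hw₃m
    omega
  -- conclude: two distinct words at the reflected corner
  have hu_in : u ∈ (multisetPerms N m lam).filter fun w =>
      ((des w : ℤ), (maj w : ℤ)) = ((d₁ : ℤ), (d₂ : ℤ)) := by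
    rw [Finset.mem_filter]
    refine ⟨humem, ?_⟩
    rw [Prod.mk.injEq]
    exact ⟨hd₁.symm, hmaju⟩
  have hv_in : v ∈ (multisetPerms N m lam).filter fun w =>
      ((des w : ℤ), (maj w : ℤ)) = ((d₁ : ℤ), (d₂ : ℤ)) := by
    rw [Finset.mem_filter]
    refine ⟨hvmem, ?_⟩
    rw [Prod.mk.injEq]
    refine ⟨?_, hmajv⟩
    rw [hd₁]
    exact_mod_cast congrArg (Nat.cast : ℕ → ℤ) (hdesv.trans hdesu.symm)
  have htwo : 1 < ((multisetPerms N m lam).filter fun w =>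
      ((des w : ℤ), (maj w : ℤ)) = ((d₁ : ℤ), (d₂ : ℤ))).card :=
    Finset.one_lt_card.mpr ⟨u, hu_in, v, hv_in, hne⟩
  omega
end

section
/- Symmetry of the joint distribution on a fixed descent number (used in the proof of Proposition 2.8): for all r, m ∈ ℕ and all i, j ∈ ℕ₀, the number of w ∈ S_{r,m} with des(w) = i and maj(w) = j equals the number of w ∈ S_{r,m} with des(w) = i and maj(w) = i·rm − j. -/
open Finset

/-- The reverse-complement of a word. -/
def wordRev {N m : ℕ} (w : Fin N → Fin m) : Fin N → Fin m :=
  fun k => (w k.rev).rev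

lemma wordRev_wordRev {N m : ℕ} (w : Fin N → Fin m) : wordRev (wordRev w) = w := by
  funext k; simp [wordRev, Fin.rev_rev]

lemma mem_desSet_wordRev {N m : ℕ} (w : Fin N → Fin m) (k : ℕ)
    (hk : k ∈ Finset.Ico 1 N) : (N - k) ∈ desSet (wordRev w) ↔ k ∈ desSet w := by
  simp only [Finset.mem_Ico] at hk
  obtain ⟨hk1, hk2⟩ := hk
  have h1 : N - k < N := by omega
  have h2 : N - k - 1 < N := by omega
  have h3 : k < N := hk2
  have h4 : k - 1 < N := by omega
  simp only [desSet, Finset.mem_filter]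
  simp only [desSet, Finset.mem_filter, Finset.mem_Ico, letterAt, h1, h2, h3, h4,
    dif_pos, wordRev, Fin.val_rev]
  have e1 : ((⟨N - k, h1⟩ : Fin N).rev) = ⟨k - 1, h4⟩ := by
    ext; simp [Fin.val_rev]; omega
  have e2 : ((⟨N - k - 1, h2⟩ : Fin N).rev) = ⟨k, h3⟩ := by
    ext; simp [Fin.val_rev]; omega
  rw [e1, e2]
  have b1 : (w ⟨k - 1, h4⟩ : ℕ) < m := (w _).isLt
  have b2 : (w ⟨k, h3⟩ : ℕ) < m := (w _).isLt
  constructor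
  · rintro ⟨_, h⟩; exact ⟨⟨hk1, trivial⟩, by omega⟩
  · rintro ⟨_, h⟩; exact ⟨⟨by omega, trivial⟩, by omega⟩

lemma mem_desSet_wordRev' {N m : ℕ} (w : Fin N → Fin m) (k : ℕ)
    (hk : k ∈ Finset.Ico 1 N) : k ∈ desSet (wordRev w) ↔ (N - k) ∈ desSet w := by
  simp only [Finset.mem_Ico] at hk
  have h : N - (N - k) = k := by omega
  have := mem_desSet_wordRev w (N - k) (by simp [Finset.mem_Ico]; omega)
  rw [h] at this
  exact this

lemma desSet_subset {N m : ℕ} (w : Fin N → Fin m) : desSet w ⊆ Finset.Ico 1 N :=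
  Finset.filter_subset _ _

lemma maj_wordRev {N m : ℕ} (w : Fin N → Fin m) :
    maj (wordRev w) = ∑ k ∈ desSet w, (N - k) := by
  unfold maj
  apply Finset.sum_nbij' (i := fun k => N - k) (j := fun k => N - k)
  · intro k hk
    exact (mem_desSet_wordRev' w k (desSet_subset _ hk)).mp hk
  · intro k hk
    exact (mem_desSet_wordRev w k (desSet_subset _ hk)).mpr hk
  · intro k hk
    have := Finset.mem_Ico.mp (desSet_subset _ hk); omega
  · intro k hk
    have := Finset.mem_Ico.mp (desSet_subset _ hk); omega
  · intro k hk
    have := Finset.mem_Ico.mp (desSet_subset _ hk); omega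

lemma des_wordRev {N m : ℕ} (w : Fin N → Fin m) : des (wordRev w) = des w := by
  unfold des
  apply Finset.card_nbij' (i := fun k => N - k) (j := fun k => N - k)
  · intro k hk
    exact (mem_desSet_wordRev' w k (desSet_subset _ hk)).mp hk
  · intro k hk
    exact (mem_desSet_wordRev w k (desSet_subset _ hk)).mpr hk
  · intro k hk
    have := Finset.mem_Ico.mp (desSet_subset _ hk); dsimp only; omega
  · intro k hk
    have := Finset.mem_Ico.mp (desSet_subset _ hk); dsimp only; omega

lemma wordRev_mem_multisetPerms {N m r : ℕ} {w : Fin N → Fin m}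
    (hw : w ∈ multisetPerms N m (fun _ => r)) :
    wordRev w ∈ multisetPerms N m (fun _ => r) := by
  simp only [multisetPerms, Finset.mem_filter, Finset.mem_univ, true_and] at hw ⊢
  intro c
  rw [← hw c.rev]
  apply Finset.card_equiv (Fin.revPerm)
  intro k
  simp only [Finset.mem_filter, Finset.mem_univ, true_and]
  simp only [Finset.mem_filter, Finset.mem_univ, true_and, wordRev, Fin.revPerm_apply]
  constructor
  · intro h; rw [← h, Fin.rev_rev]
  · intro h; rw [h, Fin.rev_rev]

lemma maj_wordRev_int {N m : ℕ} (w : Fin N → Fin m) :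
    (maj (wordRev w) : ℤ) = (des w : ℤ) * N - maj w := by
  rw [maj_wordRev]
  have hc : ∀ k ∈ desSet w, ((N - k : ℕ) : ℤ) = (N : ℤ) - k := by
    intro k hk
    have := Finset.mem_Ico.mp (desSet_subset _ hk)
    have hkN : k ≤ N := by omega
    push_cast [hkN]; ring
  rw [Nat.cast_sum, Finset.sum_congr rfl hc, Finset.sum_sub_distrib,
    Finset.sum_const, nsmul_eq_mul]
  simp [des, maj]

/-- **Symmetry of the joint distribution on a fixed descent number** (used in the proof of
Proposition 2.8): `#{w ∈ S_{r,m} : des w = i, maj w = j} = #{w ∈ S_{r,m} : des w = i,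
maj w = i·rm − j}`. -/
theorem maj_symmetry_fixed_des (r m : ℕ) (hr : 0 < r) (hm : 0 < m) (i j : ℕ) :
    ((multisetPerms (r * m) m (fun _ => r)).filter
        (fun w => des w = i ∧ maj w = j)).card =
      ((multisetPerms (r * m) m (fun _ => r)).filter
        (fun w => des w = i ∧ (maj w : ℤ) = (i : ℤ) * (r * m : ℤ) - (j : ℤ))).card := by
  apply Finset.card_nbij' (i := wordRev) (j := wordRev)
  · intro w hw
    simp only [Finset.mem_coe, Finset.mem_filter] at hw ⊢
    obtain ⟨hmem, hdes, hmaj⟩ := hw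
    refine ⟨wordRev_mem_multisetPerms hmem, by rw [des_wordRev, hdes], ?_⟩
    rw [maj_wordRev_int, hdes, hmaj]
    push_cast
    ring
  · intro w hw
    simp only [Finset.mem_coe, Finset.mem_filter] at hw ⊢
    obtain ⟨hmem, hdes, hmaj⟩ := hw
    refine ⟨wordRev_mem_multisetPerms hmem, by rw [des_wordRev, hdes], ?_⟩
    have h := maj_wordRev_int w
    rw [hdes, hmaj] at h
    have h2 : (maj (wordRev w) : ℤ) = (j : ℤ) := by rw [h]; push_cast; ring
    exact_mod_cast h2
  · intro w _; exact wordRev_wordRev w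
  · intro w _; exact wordRev_wordRev w
end

section
/- Equidistribution (from MacMahon's third proof of Lemma 2.12): for a partition λ = (λ₁, λ₂) and every k ∈ ℕ₀, the number of words w ∈ S_{(λ₁,λ₂)} with exactly k descents equals the number of words w ∈ S_{(λ₁,λ₂)} having exactly k occurrences of the letter 2 among the first λ₁ positions. -/
open Finset

def ones {n : ℕ} (w : Fin n → Fin 2) : ℕ := (univ.filter fun j => w j = 1).card

lemma letterAt_cons_zero {m : ℕ} (c : Fin 2) (u : Fin m → Fin 2) :
    letterAt (Fin.cons c u : Fin (m+1) → Fin 2) 0 = c := by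
  simp [letterAt]

lemma letterAt_cons_succ {m : ℕ} (c : Fin 2) (u : Fin m → Fin 2) (i : ℕ) :
    letterAt (Fin.cons c u : Fin (m+1) → Fin 2) (i+1) = letterAt u i := by
  unfold letterAt
  by_cases h : i < m
  · rw [dif_pos (by omega), dif_pos h]
    have : (⟨i+1, by omega⟩ : Fin (m+1)) = Fin.succ ⟨i, h⟩ := rfl
    rw [this, Fin.cons_succ]
  · rw [dif_neg (by omega), dif_neg h]

lemma desSet_cons {m : ℕ} (c : Fin 2) (u : Fin m → Fin 2) :
    desSet (Fin.cons c u : Fin (m+1) → Fin 2) =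
      ((desSet u).image (· + 1)) ∪
        (if 0 < m ∧ (c : ℕ) = 1 ∧ letterAt u 0 = 0 then {1} else ∅) := by
  ext i
  simp only [desSet, mem_union, mem_image, mem_filter, mem_Ico]
  constructor
  · rintro ⟨⟨h1, h2⟩, h3⟩
    rcases Nat.eq_or_lt_of_le h1 with h | h
    · right
      subst_vars
      rw [letterAt_cons_zero] at h3
      rw [show letterAt (Fin.cons c u : Fin (m+1) → Fin 2) 1 = letterAt u 0 from
        letterAt_cons_succ c u 0] at h3
      have hm : 0 < m := by omega
      have : letterAt u 0 = 0 ∧ (c:ℕ) = 1 := by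
        have := (u ⟨0, hm⟩).isLt
        unfold letterAt at h3 ⊢
        rw [dif_pos hm] at h3 ⊢
        have := c.isLt
        omega
      simp [hm, this.1, this.2]
    · left
      obtain ⟨j, rfl⟩ : ∃ j, i = j + 1 + 1 := ⟨i - 2, by omega⟩
      refine ⟨j+1, ⟨⟨by omega, by omega⟩, ?_⟩, rfl⟩
      rw [letterAt_cons_succ] at h3
      rw [show j + 1 + 1 - 1 = (j : ℕ) + 1 from rfl, letterAt_cons_succ] at h3
      simpa using h3
  · rintro (⟨j, ⟨⟨hj1, hj2⟩, hj3⟩, rfl⟩ | h)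
    · refine ⟨⟨by omega, by omega⟩, ?_⟩
      rw [letterAt_cons_succ, show j + 1 - 1 = (j - 1) + 1 by omega, letterAt_cons_succ]
      exact hj3
    · split_ifs at h with hc
      · simp only [mem_singleton] at h
        subst h
        refine ⟨⟨le_refl 1, by omega⟩, ?_⟩
        rw [show (1:ℕ) - 1 = 0 from rfl, letterAt_cons_zero,
          show letterAt (Fin.cons c u : Fin (m+1) → Fin 2) 1 = letterAt u 0 from
            letterAt_cons_succ c u 0]
        omega
      · simp at h

lemma des_cons {m : ℕ} (c : Fin 2) (u : Fin m → Fin 2) :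
    des (Fin.cons c u : Fin (m+1) → Fin 2) =
      des u + (if 0 < m ∧ (c : ℕ) = 1 ∧ letterAt u 0 = 0 then 1 else 0) := by
  rw [des, desSet_cons, card_union_of_disjoint, card_image_of_injective _
    (add_left_injective 1)]
  · congr 1
    split_ifs <;> simp
  · split_ifs with h
    · simp only [disjoint_singleton_right, mem_image]
      rintro ⟨j, hj, hj1⟩
      have : 1 ≤ j := by
        have := mem_Ico.1 (mem_of_mem_filter j hj)
        exact this.1
      omega
    · simp

lemma ones_cons {m : ℕ} (c : Fin 2) (u : Fin m → Fin 2) :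
    ones (Fin.cons c u : Fin (m+1) → Fin 2) = (if c = 1 then 1 else 0) + ones u := by
  rw [ones, ones, card_filter, card_filter, Fin.sum_univ_succ]
  simp [Fin.cons_zero, Fin.cons_succ]

lemma card_filter_cons {m : ℕ} (p : (Fin (m+1) → Fin 2) → Prop) [DecidablePred p] :
    (univ.filter p).card =
      (univ.filter fun u : Fin m → Fin 2 => p (Fin.cons 0 u)).card +
      (univ.filter fun u : Fin m → Fin 2 => p (Fin.cons 1 u)).card := by
  rw [card_filter, card_filter, card_filter,
    ← Equiv.sum_comp (Fin.consEquiv (fun _ => Fin 2)) (fun w => if p w then 1 else 0)]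
  rw [Fintype.sum_prod_type, Fin.sum_univ_two]
  rfl

def F (n b k : ℕ) : ℕ :=
  ((univ : Finset (Fin n → Fin 2)).filter fun w => ones w = b ∧ des w = k).card

def H (n b k : ℕ) : ℕ :=
  ((univ : Finset (Fin n → Fin 2)).filter
    fun w => (ones w = b ∧ des w = k) ∧ letterAt w 0 = 1).card

lemma ones_le {n : ℕ} (w : Fin n → Fin 2) : ones w ≤ n := by
  calc ones w ≤ (univ : Finset (Fin n)).card := card_filter_le _ _
  _ = n := by simp

lemma F_gt {n b k : ℕ} (h : n < b) : F n b k = 0 := by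
  rw [F, card_eq_zero, filter_eq_empty_iff]
  rintro w - ⟨h1, -⟩
  have := ones_le w
  omega

lemma F_zero (b k : ℕ) : F 0 b k = if b = 0 ∧ k = 0 then 1 else 0 := by
  rw [F, Finset.univ_unique, filter_singleton]
  have h1 : ∀ w : Fin 0 → Fin 2, ones w = 0 := fun w => by simp [ones]
  have h2 : ∀ w : Fin 0 → Fin 2, des w = 0 := fun w => by
    rw [des, desSet]
    simp
  split_ifs with hA hB hC
  · simp
  · obtain ⟨ha, hb⟩ := hA
    rw [h1 _] at ha; rw [h2 _] at hb
    exact absurd ⟨ha.symm, hb.symm⟩ hB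
  · obtain ⟨rfl, rfl⟩ := hC
    exact absurd ⟨h1 _, h2 _⟩ hA
  · simp

lemma H_zero (b k : ℕ) : H 0 b k = 0 := by
  rw [H, card_eq_zero, filter_eq_empty_iff]
  rintro w - ⟨-, h⟩
  simp [letterAt] at h

lemma Frec (m b k : ℕ) : F (m+1) b k = F m b k + H (m+1) b k := by
  rw [F, card_filter_cons, H, card_filter_cons]
  have e1 : (filter (fun u : Fin m → Fin 2 =>
      ones (Fin.cons 0 u) = b ∧ des (Fin.cons 0 u) = k) univ) =
      filter (fun u => ones u = b ∧ des u = k) univ :=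
    filter_congr (fun u _ => by simp [ones_cons, des_cons])
  have e2 : (filter (fun u : Fin m → Fin 2 =>
      (ones (Fin.cons 0 u) = b ∧ des (Fin.cons 0 u) = k) ∧
        letterAt (Fin.cons 0 u) 0 = 1) univ) = ∅ := by
    rw [filter_eq_empty_iff]
    intro u _
    simp [letterAt_cons_zero]
  have e3 : (filter (fun u : Fin m → Fin 2 =>
      (ones (Fin.cons 1 u) = b ∧ des (Fin.cons 1 u) = k) ∧
        letterAt (Fin.cons 1 u) 0 = 1) univ) =
      filter (fun u : Fin m → Fin 2 =>
        ones (Fin.cons 1 u) = b ∧ des (Fin.cons 1 u) = k) univ :=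
    filter_congr (fun u _ => by simp [letterAt_cons_zero])
  rw [e1, e2, e3, card_empty, zero_add, F]

lemma Hsucc (m b k : ℕ) : H (m+1) b k =
    ((univ : Finset (Fin m → Fin 2)).filter
      fun u => 1 + ones u = b ∧
        des u + (if 0 < m ∧ letterAt u 0 = 0 then 1 else 0) = k).card := by
  rw [H, card_filter_cons]
  have e2 : (filter (fun u : Fin m → Fin 2 =>
      (ones (Fin.cons 0 u) = b ∧ des (Fin.cons 0 u) = k) ∧
        letterAt (Fin.cons 0 u) 0 = 1) univ) = ∅ := by
    rw [filter_eq_empty_iff]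
    intro u _
    simp [letterAt_cons_zero]
  have e3 : (filter (fun u : Fin m → Fin 2 =>
      (ones (Fin.cons 1 u) = b ∧ des (Fin.cons 1 u) = k) ∧
        letterAt (Fin.cons 1 u) 0 = 1) univ) =
      filter (fun u : Fin m → Fin 2 => 1 + ones u = b ∧
        des u + (if 0 < m ∧ letterAt u 0 = 0 then 1 else 0) = k) univ :=
    filter_congr (fun u _ => by simp [letterAt_cons_zero, ones_cons, des_cons])
  rw [e2, e3, card_empty, zero_add]

lemma H_gt {n b k : ℕ} (h : n < b) : H n b k = 0 := by
  rw [H, card_eq_zero, filter_eq_empty_iff]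
  rintro w - ⟨⟨h1, -⟩, -⟩
  have := ones_le w
  omega

lemma H_one (b k : ℕ) : H 1 b k = if b = 1 ∧ k = 0 then 1 else 0 := by
  rw [Hsucc]
  have h1 : ∀ w : Fin 0 → Fin 2, ones w = 0 := fun w => by simp [ones]
  have h2 : ∀ w : Fin 0 → Fin 2, des w = 0 := fun w => by rw [des, desSet]; simp
  rw [Finset.univ_unique, filter_singleton]
  by_cases hb : b = 1 ∧ k = 0
  · obtain ⟨rfl, rfl⟩ := hb
    rw [if_pos ⟨by rw [h1 _], by rw [h2 _]; simp⟩, if_pos ⟨rfl, rfl⟩, card_singleton]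
  · rw [if_neg ?_, if_neg hb, card_empty]
    rintro ⟨hx, hy⟩
    rw [h1 _] at hx
    rw [h2 _] at hy
    simp at hy
    exact hb ⟨by omega, by omega⟩

lemma Hrec0 (m b : ℕ) : H (m+2) (b+1) 0 = H (m+1) b 0 := by
  rw [Hsucc, card_filter_cons, Hsucc]
  have e1 : (filter (fun v : Fin m → Fin 2 =>
      1 + ones (Fin.cons 0 v) = b + 1 ∧
        des (Fin.cons 0 v) + (if 0 < m + 1 ∧ letterAt (Fin.cons 0 v) 0 = 0 then 1 else 0)
          = 0) univ) = ∅ := by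
    rw [filter_eq_empty_iff]
    intro v _
    simp [letterAt_cons_zero]
  have e3 : (filter (fun v : Fin m → Fin 2 =>
      1 + ones (Fin.cons 1 v) = b + 1 ∧
        des (Fin.cons 1 v) + (if 0 < m + 1 ∧ letterAt (Fin.cons 1 v) 0 = 0 then 1 else 0)
          = 0) univ) =
      filter (fun v : Fin m → Fin 2 => 1 + ones v = b ∧
        des v + (if 0 < m ∧ letterAt v 0 = 0 then 1 else 0) = 0) univ :=
    filter_congr (fun v _ => by
      simp only [letterAt_cons_zero, ones_cons, des_cons]
      constructor
      · rintro ⟨hh1, hh2⟩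
        constructor
        · simp at hh1; omega
        · simpa using hh2
      · rintro ⟨hh1, hh2⟩
        constructor
        · simp; omega
        · simpa using hh2)
  rw [e1, e3, card_empty, zero_add]

lemma HrecS (m b k : ℕ) : H (m+2) (b+1) (k+1) = F m b k + H (m+1) b (k+1) := by
  rw [Hsucc, card_filter_cons, Hsucc, F]
  congr 1
  · refine congrArg Finset.card (filter_congr fun v _ => ?_)
    simp only [letterAt_cons_zero, ones_cons, des_cons]
    constructor
    · rintro ⟨hh1, hh2⟩
      refine ⟨by simp at hh1; omega, ?_⟩
      simp at hh2
      omega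
    · rintro ⟨hh1, hh2⟩
      refine ⟨by simp; omega, ?_⟩
      simp
      omega
  · refine congrArg Finset.card (filter_congr fun v _ => ?_)
    simp only [letterAt_cons_zero, ones_cons, des_cons]
    constructor
    · rintro ⟨hh1, hh2⟩
      refine ⟨by simp at hh1; omega, ?_⟩
      simpa using hh2
    · rintro ⟨hh1, hh2⟩
      refine ⟨by simp; omega, ?_⟩
      simpa using hh2

lemma H_bzero (n k : ℕ) : H n 0 k = 0 := by
  cases n with
  | zero => exact H_zero 0 k
  | succ m =>
    rw [Hsucc, card_eq_zero, filter_eq_empty_iff]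
    rintro v - ⟨h1, -⟩
    omega

def Hval : ℕ → ℕ → ℕ → ℕ
  | a, b, 0 => if a = 0 ∧ 1 ≤ b then 1 else 0
  | a, b, (k+1) => if 1 ≤ a then (a-1).choose k * b.choose (k+1) else 0

lemma Hval_bzero (a k : ℕ) : Hval a 0 k = 0 := by
  cases k with
  | zero => simp [Hval]
  | succ k => simp [Hval, Nat.choose_zero_succ]

theorem FH_formula : ∀ n b k, b ≤ n →
    F n b k = (n - b).choose k * b.choose k ∧ H n b k = Hval (n - b) b k := by
  intro n
  induction n using Nat.strong_induction_on with
  | _ n ih =>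
    match n with
    | 0 =>
      intro b k hb
      obtain rfl : b = 0 := by omega
      refine ⟨?_, ?_⟩
      · rw [F_zero]
        cases k with
        | zero => simp
        | succ k => simp [Nat.choose_zero_succ]
      · rw [H_zero, Hval_bzero]
    | (m+1) =>
      intro b k hb
      -- first the H-part
      have hH : H (m+1) b k = Hval (m+1-b) b k := by
        match b with
        | 0 => rw [H_bzero, Hval_bzero]
        | (b'+1) =>
          match m with
          | 0 =>
            obtain rfl : b' = 0 := by omega
            rw [H_one]
            cases k with
            | zero => simp [Hval]
            | succ k => simp [Hval]
          | (m'+1) =>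
            have hb' : b' ≤ m' + 1 := by omega
            cases k with
            | zero =>
              rw [Hrec0, (ih (m'+1) (by omega) b' 0 hb').2]
              show Hval (m'+1-b') b' 0 = Hval (m'+2-(b'+1)) (b'+1) 0
              have : m'+2-(b'+1) = m'+1-b' := by omega
              rw [this]
              simp only [Hval]
              rcases Nat.eq_zero_or_pos b' with rfl | hb0
              · have : ¬ (m'+1-0 = 0) := by omega
                simp [this]
              · split_ifs with p q <;> simp_all <;> omega
            | succ k'' =>
              rw [HrecS, (ih (m'+1) (by omega) b' (k''+1) hb').2]
              rcases Nat.lt_or_ge m' b' with hlt | hge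
              · obtain rfl : b' = m' + 1 := by omega
                rw [F_gt hlt]
                simp [Hval]
              · rw [(ih m' (by omega) b' k'' hge).1]
                simp only [Hval]
                have e1 : m'+1-b' = (m'-b') + 1 := by omega
                have e2 : m'+2-(b'+1) = (m'-b') + 1 := by omega
                rw [e1, e2]
                simp only [Nat.le_add_left, if_pos, Nat.add_sub_cancel]
                rw [Nat.choose_succ_succ b' k'', Nat.mul_add]
      refine ⟨?_, hH⟩
      rw [Frec, hH]
      rcases Nat.lt_or_ge m b with hlt | hge
      · obtain rfl : b = m + 1 := by omega
        rw [F_gt hlt]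
        have : m + 1 - (m+1) = 0 := by omega
        rw [this]
        cases k with
        | zero => simp [Hval]
        | succ k => simp [Hval, Nat.choose_zero_succ]
      · rw [(ih m (by omega) b k hge).1]
        have e1 : m + 1 - b = (m - b) + 1 := by omega
        rw [e1]
        cases k with
        | zero => simp [Hval]
        | succ k'' =>
          simp only [Hval, Nat.le_add_left, if_pos, Nat.add_sub_cancel]
          rw [Nat.choose_succ_succ (m-b) k'', Nat.add_mul]
          simp only [Nat.succ_eq_add_one]
          omega

lemma card_ones (n j : ℕ) :
    ((univ : Finset (Fin n → Fin 2)).filter fun u => ones u = j).card = n.choose j := by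
  have hp : (powersetCard j (univ : Finset (Fin n))).card = n.choose j := by
    rw [card_powersetCard, card_univ, Fintype.card_fin]
  rw [← hp]
  refine card_nbij' (s := univ.filter fun u => ones u = j) (t := powersetCard j univ)
    (fun u => univ.filter (fun x => u x = 1))
    (fun S => fun x => if x ∈ S then (1 : Fin 2) else (0 : Fin 2)) ?_ ?_ ?_ ?_
  · intro u hu
    simp only [mem_coe, mem_filter, mem_univ, true_and] at hu
    simp only [mem_coe, mem_powersetCard]
    exact ⟨filter_subset _ _ |>.trans (subset_refl _) |>.trans (subset_univ _), hu⟩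
  · intro S hS
    simp only [mem_coe, mem_powersetCard] at hS
    rw [mem_coe, mem_filter]
    simp only [mem_univ, true_and, ones]
    rw [← hS.2]
    congr 1
    ext x
    simp only [mem_filter, mem_univ, true_and]
    constructor
    · intro h
      by_contra hx
      simp [hx] at h
    · intro h
      simp [h]
  · intro u hu
    funext x
    by_cases h : u x = 1
    · simp [h]
    · have : u x = 0 := by omega
      simp [this]
  · intro S hS
    ext x
    simp only [mem_filter, mem_univ, true_and]
    constructor
    · intro h
      by_contra hx
      simp [hx] at h
    · intro h
      simp [h]

lemma card_filter_append {a b : ℕ} (p : (Fin (a+b) → Fin 2) → Prop) [DecidablePred p] :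
    ((univ : Finset (Fin (a+b) → Fin 2)).filter p).card =
      (((univ : Finset ((Fin a → Fin 2) × (Fin b → Fin 2)))).filter
        fun uv => p (Fin.append uv.1 uv.2)).card := by
  refine card_nbij' (fun w => (fun i => w (Fin.castAdd b i), fun i => w (Fin.natAdd a i)))
    (fun uv => Fin.append uv.1 uv.2) ?_ ?_ ?_ ?_
  · intro w hw
    simp only [mem_coe, mem_filter, mem_univ, true_and] at hw ⊢
    rwa [Fin.append_castAdd_natAdd]
  · intro uv huv
    simp only [mem_coe, mem_filter, mem_univ, true_and] at huv ⊢
    exact huv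
  · intro w _
    exact Fin.append_castAdd_natAdd
  · intro uv _
    ext i
    · simp [Fin.append_left]
    · simp [Fin.append_right]

lemma ones_append {a b : ℕ} (u : Fin a → Fin 2) (v : Fin b → Fin 2) :
    ones (Fin.append u v) = ones u + ones v := by
  rw [ones, ones, ones, card_filter, card_filter, card_filter, Fin.sum_univ_add]
  congr 1
  · exact Finset.sum_congr rfl fun i _ => by rw [Fin.append_left]
  · exact Finset.sum_congr rfl fun i _ => by rw [Fin.append_right]

lemma onesFirst_append {a b : ℕ} (u : Fin a → Fin 2) (v : Fin b → Fin 2) :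
    ((univ : Finset (Fin (a+b))).filter
      fun j : Fin (a+b) => (j : ℕ) < a ∧ Fin.append u v j = 1).card = ones u := by
  rw [ones, card_filter, card_filter, Fin.sum_univ_add]
  have e2 : ∀ i : Fin b,
      (if ((Fin.natAdd a i : Fin (a+b)) : ℕ) < a ∧ Fin.append u v (Fin.natAdd a i) = 1
        then 1 else 0) = 0 := by
    intro i
    rw [if_neg]
    rintro ⟨h1, -⟩
    simp [Fin.natAdd] at h1
  rw [Finset.sum_congr rfl fun i _ => e2 i, Finset.sum_const, smul_zero, add_zero]
  refine Finset.sum_congr rfl fun i _ => ?_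
  rw [Fin.append_left]
  congr 1
  simp only [Fin.coe_castAdd, eq_iff_iff, and_iff_right_iff_imp]
  intro _
  exact i.isLt

lemma MP_eq (l₁ l₂ : ℕ) : multisetPerms (l₁ + l₂) 2 ![l₁, l₂] =
    (univ : Finset (Fin (l₁+l₂) → Fin 2)).filter (fun w => ones w = l₂) := by
  unfold multisetPerms
  apply filter_congr
  intro w _
  constructor
  · intro h
    have := h 1
    simpa [ones] using this
  · intro h
    have h1 : (univ.filter fun j => w j = 1).card = l₂ := h
    have e : (univ.filter fun j : Fin (l₁+l₂) => ¬ (w j = 0)) =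
        univ.filter fun j => w j = 1 := filter_congr fun j _ => by
      constructor
      · intro hj
        have := (w j).isLt
        omega
      · intro hj
        omega
    have hsum := card_filter_add_card_filter_not
      (s := univ) (p := fun j : Fin (l₁+l₂) => w j = 0)
    rw [e, card_univ, Fintype.card_fin] at hsum
    intro i
    fin_cases i
    · simpa using by omega
    · simpa using h1

/-- **Equidistribution** (from MacMahon's third proof of Lemma 2.12): for `λ = (λ₁,λ₂)` and
every `k`, the number of words in `S_{(λ₁,λ₂)}` with exactly `k` descents equals the number
of words with exactly `k` occurrences of the letter `2` among the first `λ₁` positions. -/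
theorem descents_equidistributed_with_twos_in_first_positions
    (l₁ l₂ : ℕ) (h₁ : l₂ ≤ l₁) (h₂ : 1 ≤ l₂) (k : ℕ) :
    ((multisetPerms (l₁ + l₂) 2 ![l₁, l₂]).filter (fun w => des w = k)).card =
      ((multisetPerms (l₁ + l₂) 2 ![l₁, l₂]).filter
        (fun w => (Finset.univ.filter
          (fun j : Fin (l₁ + l₂) => (j : ℕ) < l₁ ∧ w j = 1)).card = k)).card := by
  rw [MP_eq, filter_filter, filter_filter]
  have hL : ((univ : Finset (Fin (l₁+l₂) → Fin 2)).filter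
      fun w => ones w = l₂ ∧ des w = k).card = l₁.choose k * l₂.choose k := by
    have h := (FH_formula (l₁+l₂) l₂ k (by omega)).1
    rw [Nat.add_sub_cancel] at h
    exact h
  have hX : ((univ : Finset (Fin l₂ → Fin 2)).filter
      fun v => k + ones v = l₂).card = l₂.choose k := by
    by_cases hk : k ≤ l₂
    · rw [filter_congr (fun v (_ : v ∈ univ) => (by omega : k + ones v = l₂ ↔ ones v = l₂ - k)),
        card_ones, Nat.choose_symm hk]
    · have he : ((univ : Finset (Fin l₂ → Fin 2)).filter fun v => k + ones v = l₂) = ∅ := by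
        rw [filter_eq_empty_iff]
        intro v _
        omega
      rw [he, card_empty, eq_comm]
      exact Nat.choose_eq_zero_of_lt (by omega)
  have hR : ((univ : Finset (Fin (l₁+l₂) → Fin 2)).filter
      fun w => ones w = l₂ ∧
        (univ.filter fun j : Fin (l₁+l₂) => (j : ℕ) < l₁ ∧ w j = 1).card = k).card
      = l₁.choose k * l₂.choose k := by
    rw [card_filter_append]
    have e : ∀ uv : (Fin l₁ → Fin 2) × (Fin l₂ → Fin 2),
        (ones (Fin.append uv.1 uv.2) = l₂ ∧
          (univ.filter fun j : Fin (l₁+l₂) =>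
            (j : ℕ) < l₁ ∧ Fin.append uv.1 uv.2 j = 1).card = k) ↔
        (ones uv.1 = k ∧ k + ones uv.2 = l₂) := by
      intro uv
      rw [ones_append, onesFirst_append]
      constructor
      · rintro ⟨x, y⟩
        omega
      · rintro ⟨x, y⟩
        omega
    rw [filter_congr (fun uv (_ : uv ∈ univ) => e uv), ← univ_product_univ,
      filter_product (fun u : Fin l₁ → Fin 2 => ones u = k)
        (fun v : Fin l₂ → Fin 2 => k + ones v = l₂),
      card_product, card_ones, hX]
  rw [hL, hR]
end

section
/- Proposition 2.13 (divisibility part): let r be odd. Then the polynomial 1 + x q^r divides C_{r,2}(x,q) in ℤ[x,q], i.e. C_{r,2}(x,q) = (1 + x q^r)·C'_{r,2}(x,q) for some C'_{r,2} ∈ ℤ[x,q]. -/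
open Finset

/-! ### Auxiliary development -/

namespace Prop213

noncomputable abbrev xx : MvPolynomial (Fin 2) ℤ := MvPolynomial.X 0
noncomputable abbrev qq : MvPolynomial (Fin 2) ℤ := MvPolynomial.X 1

/-- content function -/
def lamAB (a b : ℕ) : Fin 2 → ℕ := fun i => if i = 0 then a else b

/-- The descent generating polynomial for words with `a` zeros and `b` ones. -/
noncomputable def F (a b : ℕ) : MvPolynomial (Fin 2) ℤ :=
  ∑ w ∈ multisetPerms (a + b) 2 (lamAB a b), xx ^ des w * qq ^ maj w

/-- Pairs of equal-size subsets. -/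
def PP (a b : ℕ) : Finset (Finset ℕ × Finset ℕ) :=
  ((range b).powerset ×ˢ (range a).powerset).filter fun p => p.1.card = p.2.card

/-- The pair generating polynomial. -/
noncomputable def G (a b : ℕ) : MvPolynomial (Fin 2) ℤ :=
  ∑ p ∈ PP a b, xx ^ p.1.card * qq ^ (p.1.card + (∑ i ∈ p.1, i) + ∑ i ∈ p.2, i)

/-! #### letterAt and desSet of `snoc` -/

lemma letterAt_snoc_lt {n : ℕ} (w : Fin n → Fin 2) (ℓ : Fin 2) {i : ℕ} (h : i < n) :
    letterAt (Fin.snoc w ℓ) i = letterAt w i := by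
  have h' : i < n + 1 := Nat.lt_succ_of_lt h
  rw [letterAt, letterAt, dif_pos h', dif_pos h]
  exact congrArg Fin.val (Fin.snoc_castSucc (α := fun _ => Fin 2) ℓ w ⟨i, h⟩)

lemma letterAt_snoc_last {n : ℕ} (w : Fin n → Fin 2) (ℓ : Fin 2) :
    letterAt (Fin.snoc w ℓ) n = (ℓ : ℕ) := by
  have h' : n < n + 1 := Nat.lt_succ_self n
  rw [letterAt, dif_pos h']
  exact congrArg Fin.val (Fin.snoc_last (α := fun _ => Fin 2) ℓ w)

lemma letterAt_le_one {n : ℕ} (w : Fin n → Fin 2) (i : ℕ) : letterAt w i ≤ 1 := by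
  unfold letterAt
  split
  · exact Nat.lt_succ_iff.mp (Fin.is_lt _)
  · exact Nat.zero_le 1

lemma desSet_subset {N m : ℕ} (w : Fin N → Fin m) : desSet w ⊆ Finset.Ico 1 N :=
  Finset.filter_subset _ _

lemma not_mem_desSet_self {n : ℕ} (w : Fin n → Fin 2) : n ∉ desSet w := by
  intro h
  have := (Finset.mem_Ico.mp (desSet_subset w h)).2
  omega

lemma desSet_snoc_one {n : ℕ} (w : Fin n → Fin 2) :
    desSet (Fin.snoc w (1 : Fin 2)) = desSet w := by
  ext i
  simp only [desSet, Finset.mem_filter, Finset.mem_Ico]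
  constructor
  · rintro ⟨⟨h1, h2⟩, h3⟩
    rcases Nat.lt_or_ge i n with hi | hi
    · rw [letterAt_snoc_lt w _ hi, letterAt_snoc_lt w _ (by omega)] at h3
      exact ⟨⟨h1, hi⟩, h3⟩
    · exfalso
      have hin : i = n := by omega
      subst hin
      rw [letterAt_snoc_last] at h3
      have := letterAt_snoc_lt w (1 : Fin 2) (show i - 1 < i by omega)
      rw [this] at h3
      have := letterAt_le_one w (i - 1)
      simp at h3
      omega
  · rintro ⟨⟨h1, h2⟩, h3⟩
    rw [letterAt_snoc_lt w _ h2, letterAt_snoc_lt w _ (by omega)]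
    exact ⟨⟨h1, by omega⟩, h3⟩

lemma desSet_snoc_zero {n : ℕ} (w : Fin n → Fin 2) :
    desSet (Fin.snoc w (0 : Fin 2)) =
      if letterAt w (n - 1) = 1 ∧ 1 ≤ n then insert n (desSet w) else desSet w := by
  ext i
  simp only [desSet, Finset.mem_filter, Finset.mem_Ico]
  by_cases hc : letterAt w (n - 1) = 1 ∧ 1 ≤ n
  · rw [if_pos hc]
    simp only [Finset.mem_insert, Finset.mem_filter, Finset.mem_Ico]
    constructor
    · rintro ⟨⟨h1, h2⟩, h3⟩
      rcases Nat.lt_or_ge i n with hi | hi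
      · rw [letterAt_snoc_lt w _ hi, letterAt_snoc_lt w _ (by omega)] at h3
        exact Or.inr ⟨⟨h1, hi⟩, h3⟩
      · exact Or.inl (by omega)
    · rintro (h | ⟨⟨h1, h2⟩, h3⟩)
      · subst h
        refine ⟨⟨hc.2, by omega⟩, ?_⟩
        rw [letterAt_snoc_last, letterAt_snoc_lt w _ (show i - 1 < i by omega), hc.1]
        simp
      · rw [letterAt_snoc_lt w _ h2, letterAt_snoc_lt w _ (by omega)]
        exact ⟨⟨h1, by omega⟩, h3⟩
  · rw [if_neg hc]
    simp only [Finset.mem_filter, Finset.mem_Ico]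
    constructor
    · rintro ⟨⟨h1, h2⟩, h3⟩
      rcases Nat.lt_or_ge i n with hi | hi
      · rw [letterAt_snoc_lt w _ hi, letterAt_snoc_lt w _ (by omega)] at h3
        exact ⟨⟨h1, hi⟩, h3⟩
      · exfalso
        have hin : i = n := by omega
        subst hin
        rw [letterAt_snoc_last, letterAt_snoc_lt w _ (show i - 1 < i by omega)] at h3
        have hle := letterAt_le_one w (i - 1)
        have h0 : ((0 : Fin 2) : ℕ) = 0 := rfl
        rw [h0] at h3
        exact hc ⟨by omega, by omega⟩
    · rintro ⟨⟨h1, h2⟩, h3⟩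
      rw [letterAt_snoc_lt w _ h2, letterAt_snoc_lt w _ (by omega)]
      exact ⟨⟨h1, by omega⟩, h3⟩

lemma des_snoc_one {n : ℕ} (w : Fin n → Fin 2) : des (Fin.snoc w (1 : Fin 2)) = des w := by
  simp [des, desSet_snoc_one]

lemma maj_snoc_one {n : ℕ} (w : Fin n → Fin 2) : maj (Fin.snoc w (1 : Fin 2)) = maj w := by
  simp [maj, desSet_snoc_one]

lemma des_snoc_zero {n : ℕ} (w : Fin n → Fin 2) :
    des (Fin.snoc w (0 : Fin 2)) =
      des w + if letterAt w (n - 1) = 1 ∧ 1 ≤ n then 1 else 0 := by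
  rw [des, desSet_snoc_zero]
  split
  · rw [Finset.card_insert_of_notMem (not_mem_desSet_self w)]; rfl
  · simp [des]

lemma maj_snoc_zero {n : ℕ} (w : Fin n → Fin 2) :
    maj (Fin.snoc w (0 : Fin 2)) =
      maj w + if letterAt w (n - 1) = 1 ∧ 1 ≤ n then n else 0 := by
  rw [maj, desSet_snoc_zero]
  split
  · rw [Finset.sum_insert (not_mem_desSet_self w), maj]; omega
  · simp [maj]

/-! #### membership of `snoc` in multisetPerms -/

lemma count_snoc {n : ℕ} (w : Fin n → Fin 2) (ℓ i : Fin 2) :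
    (Finset.univ.filter fun j => (Fin.snoc w ℓ : Fin (n+1) → Fin 2) j = i).card
      = (Finset.univ.filter fun j => w j = i).card + if ℓ = i then 1 else 0 := by
  rw [Finset.card_filter, Finset.card_filter, Fin.sum_univ_castSucc]
  simp [Fin.snoc_castSucc, Fin.snoc_last]

lemma snoc_mem_iff {n : ℕ} (w : Fin n → Fin 2) (ℓ : Fin 2) (lam lam' : Fin 2 → ℕ)
    (hlam : ∀ i, lam i = lam' i + if ℓ = i then 1 else 0) :
    Fin.snoc w ℓ ∈ multisetPerms (n + 1) 2 lam ↔ w ∈ multisetPerms n 2 lam' := by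
  simp only [multisetPerms, Finset.mem_filter, Finset.mem_univ, true_and]
  constructor
  · intro h i
    have := h i
    rw [count_snoc, hlam i] at this
    omega
  · intro h i
    rw [count_snoc, hlam i, h i]

/-! #### the two transfer lemmas -/

lemma sum_filter_last {n : ℕ} (lam lam' : Fin 2 → ℕ) (ℓ : Fin 2)
    (hlam : ∀ i, lam i = lam' i + if ℓ = i then 1 else 0)
    (f : (Fin (n + 1) → Fin 2) → MvPolynomial (Fin 2) ℤ) :
    ∑ w ∈ (multisetPerms (n + 1) 2 lam).filter (fun w => w (Fin.last n) = ℓ), f w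
      = ∑ w' ∈ multisetPerms n 2 lam', f (Fin.snoc w' ℓ) := by
  refine Finset.sum_nbij' (fun w => Fin.init w) (fun w' => Fin.snoc w' ℓ) ?_ ?_ ?_ ?_ ?_
  · intro w hw
    rw [Finset.mem_filter] at hw
    obtain ⟨hw1, hw2⟩ := hw
    have hsnoc : Fin.snoc (Fin.init w) ℓ = w := by
      rw [← hw2]; exact Fin.snoc_init_self w
    rw [← snoc_mem_iff (Fin.init w) ℓ lam lam' hlam, hsnoc]
    exact hw1
  · intro w' hw'
    rw [Finset.mem_filter]
    exact ⟨(snoc_mem_iff w' ℓ lam lam' hlam).mpr hw', by simp [Fin.snoc_last]⟩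
  · intro w hw
    rw [Finset.mem_filter] at hw
    rw [← hw.2]
    exact Fin.snoc_init_self w
  · intro w' _
    exact Fin.init_snoc (α := fun _ => Fin 2) ℓ w'
  · intro w hw
    rw [Finset.mem_filter] at hw
    rw [← hw.2, Fin.snoc_init_self]

/-! #### length congruence -/

lemma sum_MP_congr {N M : ℕ} (h : N = M) (lam : Fin 2 → ℕ)
    (f : (K : ℕ) → (Fin K → Fin 2) → MvPolynomial (Fin 2) ℤ) :
    ∑ w ∈ multisetPerms N 2 lam, f N w = ∑ w ∈ multisetPerms M 2 lam, f M w := by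
  subst h; rfl

lemma letterAt_last {n : ℕ} (u : Fin (n+1) → Fin 2) :
    letterAt u n = (u (Fin.last n) : ℕ) := by
  rw [letterAt, dif_pos (Nat.lt_succ_self n)]; rfl

/-! #### base cases -/

lemma MP_a_zero (a : ℕ) : multisetPerms (a + 0) 2 (lamAB a 0) = {fun _ => (0 : Fin 2)} := by
  ext w
  simp only [multisetPerms, Finset.mem_filter, Finset.mem_univ, true_and,
    Finset.mem_singleton]
  constructor
  · intro h
    have h1 := h 1
    simp only [lamAB] at h1
    norm_num at h1
    funext j
    have := h1 (x := j)
    revert this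
    have : ∀ x : Fin 2, ¬x = 1 → x = 0 := by decide
    exact this (w j)
  · rintro rfl i
    fin_cases i
    · simp [lamAB]
    · simp [lamAB]

lemma MP_zero_b (b : ℕ) : multisetPerms (0 + b) 2 (lamAB 0 b) = {fun _ => (1 : Fin 2)} := by
  ext w
  simp only [multisetPerms, Finset.mem_filter, Finset.mem_univ, true_and,
    Finset.mem_singleton]
  constructor
  · intro h
    have h1 := h 0
    simp only [lamAB] at h1
    norm_num at h1
    funext j
    have := h1 (x := j)
    revert this
    have : ∀ x : Fin 2, ¬x = 0 → x = 1 := by decide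
    exact this (w j)
  · rintro rfl i
    fin_cases i
    · simp [lamAB]
    · simp [lamAB]

lemma desSet_const {N : ℕ} (c : Fin 2) : desSet (fun _ : Fin N => c) = ∅ := by
  rw [desSet, Finset.filter_eq_empty_iff]
  intro i hi
  rw [Finset.mem_Ico] at hi
  have e1 : letterAt (fun _ : Fin N => c) i = (c : ℕ) := by
    rw [letterAt, dif_pos hi.2]
  have e2 : letterAt (fun _ : Fin N => c) (i - 1) = (c : ℕ) := by
    rw [letterAt, dif_pos (show i - 1 < N by omega)]
  simp [e1, e2]

lemma F_a_zero (a : ℕ) : F a 0 = 1 := by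
  rw [F, MP_a_zero]
  rw [Finset.sum_singleton]
  simp [des, maj, desSet_const]

lemma F_zero_b (b : ℕ) : F 0 b = 1 := by
  rw [F, MP_zero_b]
  rw [Finset.sum_singleton]
  simp [des, maj, desSet_const]

/-! #### the recursion for `F` -/

lemma F_succ_succ (a b : ℕ) :
    F (a+1) (b+1) = F (a+1) b + F a (b+1) + xx * qq ^ (a+b+1) * F a b - F a b := by
  classical
  have hne1 : ∀ x : Fin 2, (¬x = 1) ↔ x = 0 := by decide
  have hone : (1:ℕ) ≤ a+b+1 := by omega
  -- the plain weight
  set f : (K : ℕ) → (Fin K → Fin 2) → MvPolynomial (Fin 2) ℤ :=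
    fun K w => xx ^ des w * qq ^ maj w with hf
  -- top sum at length (a+b+1)+1
  have htop : F (a+1) (b+1)
      = ∑ w ∈ multisetPerms ((a+b+1)+1) 2 (lamAB (a+1) (b+1)), xx ^ des w * qq ^ maj w :=
    sum_MP_congr (by omega) _ f
  -- hlam facts
  have hlam1 : ∀ i, lamAB (a+1) (b+1) i = lamAB (a+1) b i + if (1:Fin 2) = i then 1 else 0 := by
    intro i; fin_cases i <;> simp [lamAB]
  have hlam0 : ∀ i, lamAB (a+1) (b+1) i = lamAB a (b+1) i + if (0:Fin 2) = i then 1 else 0 := by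
    intro i; fin_cases i <;> simp [lamAB]
  have hlam1' : ∀ i, lamAB a (b+1) i = lamAB a b i + if (1:Fin 2) = i then 1 else 0 := by
    intro i; fin_cases i <;> simp [lamAB]
  -- part 1 : last letter 1
  have hpart1 : ∑ w ∈ (multisetPerms ((a+b+1)+1) 2 (lamAB (a+1) (b+1))).filter
        (fun w => w (Fin.last (a+b+1)) = 1), xx ^ des w * qq ^ maj w = F (a+1) b := by
    rw [sum_filter_last (lamAB (a+1) (b+1)) (lamAB (a+1) b) 1 hlam1]
    simp only [des_snoc_one, maj_snoc_one]
    exact (sum_MP_congr (by omega) _ f).symm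
  -- the inner sum with last letter removed (a zero appended)
  have hinner1 : ∑ u ∈ (multisetPerms (a+b+1) 2 (lamAB a (b+1))).filter
        (fun u => u (Fin.last (a+b)) = 1), xx ^ des u * qq ^ maj u = F a b := by
    rw [sum_filter_last (lamAB a (b+1)) (lamAB a b) 1 hlam1']
    simp only [des_snoc_one, maj_snoc_one]
    rfl
  have hinnerall : ∑ u ∈ multisetPerms (a+b+1) 2 (lamAB a (b+1)), xx ^ des u * qq ^ maj u
      = F a (b+1) :=
    (sum_MP_congr (by omega) _ f).symm
  -- part 0 : last letter 0
  have hpart0 : ∑ w ∈ (multisetPerms ((a+b+1)+1) 2 (lamAB (a+1) (b+1))).filter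
        (fun w => ¬ w (Fin.last (a+b+1)) = 1), xx ^ des w * qq ^ maj w
      = xx * qq ^ (a+b+1) * F a b + (F a (b+1) - F a b) := by
    rw [Finset.filter_congr (fun w _ => hne1 (w (Fin.last (a+b+1))))]
    rw [sum_filter_last (lamAB (a+1) (b+1)) (lamAB a (b+1)) 0 hlam0]
    simp only [des_snoc_zero, maj_snoc_zero, Nat.add_sub_cancel, hone, and_true]
    rw [← Finset.sum_filter_add_sum_filter_not (multisetPerms (a+b+1) 2 (lamAB a (b+1)))
        (fun u => u (Fin.last (a+b)) = 1)]
    have hA : ∑ u ∈ (multisetPerms (a+b+1) 2 (lamAB a (b+1))).filter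
          (fun u => u (Fin.last (a+b)) = 1),
          xx ^ (des u + if letterAt u (a+b) = 1 then 1 else 0)
            * qq ^ (maj u + if letterAt u (a+b) = 1 then a+b+1 else 0)
        = xx * qq ^ (a+b+1) * F a b := by
      have hstep : ∀ u ∈ (multisetPerms (a+b+1) 2 (lamAB a (b+1))).filter
            (fun u => u (Fin.last (a+b)) = 1),
          xx ^ (des u + if letterAt u (a+b) = 1 then 1 else 0)
            * qq ^ (maj u + if letterAt u (a+b) = 1 then a+b+1 else 0)
          = xx * qq ^ (a+b+1) * (xx ^ des u * qq ^ maj u) := by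
        intro u hu
        rw [Finset.mem_filter] at hu
        have hl : letterAt u (a+b) = 1 := by
          rw [letterAt_last, hu.2]; rfl
        rw [if_pos hl, if_pos hl, pow_succ, pow_add]
        ring
      rw [Finset.sum_congr rfl hstep, ← Finset.mul_sum, hinner1]
    have hB : ∑ u ∈ (multisetPerms (a+b+1) 2 (lamAB a (b+1))).filter
          (fun u => ¬ u (Fin.last (a+b)) = 1),
          xx ^ (des u + if letterAt u (a+b) = 1 then 1 else 0)
            * qq ^ (maj u + if letterAt u (a+b) = 1 then a+b+1 else 0)
        = F a (b+1) - F a b := by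
      have hstep : ∀ u ∈ (multisetPerms (a+b+1) 2 (lamAB a (b+1))).filter
            (fun u => ¬ u (Fin.last (a+b)) = 1),
          xx ^ (des u + if letterAt u (a+b) = 1 then 1 else 0)
            * qq ^ (maj u + if letterAt u (a+b) = 1 then a+b+1 else 0)
          = xx ^ des u * qq ^ maj u := by
        intro u hu
        rw [Finset.mem_filter] at hu
        have hu2 : u (Fin.last (a+b)) = 0 := (hne1 _).mp hu.2
        have hl : ¬ letterAt u (a+b) = 1 := by
          rw [letterAt_last, hu2]
          decide
        rw [if_neg hl, if_neg hl]
        simp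
      rw [Finset.sum_congr rfl hstep, eq_sub_iff_add_eq, add_comm, ← hinner1, ← hinnerall,
        Finset.sum_filter_add_sum_filter_not]
    rw [hA, hB]
  rw [htop, ← Finset.sum_filter_add_sum_filter_not (multisetPerms ((a+b+1)+1) 2
      (lamAB (a+1) (b+1))) (fun w => w (Fin.last (a+b+1)) = 1), hpart1, hpart0]
  ring

/-! #### the pair polynomial `G` -/

lemma PP_mem {a b : ℕ} {p : Finset ℕ × Finset ℕ} :
    p ∈ PP a b ↔ p.1 ⊆ range b ∧ p.2 ⊆ range a ∧ p.1.card = p.2.card := by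
  simp [PP, Finset.mem_filter, Finset.mem_product, Finset.mem_powerset, and_assoc]

lemma G_a_zero (a : ℕ) : G a 0 = 1 := by
  have hPP : PP a 0 = {(∅, ∅)} := by
    ext p
    rw [PP_mem, Finset.mem_singleton]
    constructor
    · rintro ⟨h1, h2, h3⟩
      have e1 : p.1 = ∅ := by
        rw [← Finset.subset_empty]; simpa [Finset.range_zero] using h1
      have e2 : p.2 = ∅ := by
        rw [← Finset.card_eq_zero, ← h3, e1]; simp
      exact Prod.ext e1 e2
    · rintro rfl
      simp
  rw [G, hPP, Finset.sum_singleton]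
  simp

lemma G_zero_b (b : ℕ) : G 0 b = 1 := by
  have hPP : PP 0 b = {(∅, ∅)} := by
    ext p
    rw [PP_mem, Finset.mem_singleton]
    constructor
    · rintro ⟨h1, h2, h3⟩
      have e2 : p.2 = ∅ := by
        rw [← Finset.subset_empty]; simpa [Finset.range_zero] using h2
      have e1 : p.1 = ∅ := by
        rw [← Finset.card_eq_zero, h3, e2]; simp
      exact Prod.ext e1 e2
    · rintro rfl
      simp
  rw [G, hPP, Finset.sum_singleton]
  simp

lemma subset_range_succ_iff {n : ℕ} {X : Finset ℕ} :
    X ⊆ range (n + 1) ∧ n ∉ X ↔ X ⊆ range n := by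
  constructor
  · rintro ⟨h1, h2⟩ x hx
    have := h1 hx
    rw [Finset.mem_range] at this ⊢
    have : x ≠ n := fun h => h2 (h ▸ hx)

    omega
  · intro h
    constructor
    · exact h.trans (by intro x; simp only [Finset.mem_range]; omega)
    · intro hn
      have := h hn
      rw [Finset.mem_range] at this
      omega

lemma filter_PP_left {a b : ℕ} :
    (PP a (b+1)).filter (fun p => b ∉ p.1) = PP a b := by
  ext p
  rw [Finset.mem_filter, PP_mem, PP_mem]
  constructor
  · rintro ⟨⟨h1, h2, h3⟩, h4⟩
    exact ⟨subset_range_succ_iff.mp ⟨h1, h4⟩, h2, h3⟩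
  · rintro ⟨h1, h2, h3⟩
    have := subset_range_succ_iff.mpr h1
    exact ⟨⟨this.1, h2, h3⟩, this.2⟩

lemma filter_PP_both {a b : ℕ} :
    (PP (a+1) (b+1)).filter (fun p => b ∈ p.1 ∧ a ∉ p.2)
      = (PP a (b+1)).filter (fun p => b ∈ p.1) := by
  ext p
  rw [Finset.mem_filter, Finset.mem_filter, PP_mem, PP_mem]
  constructor
  · rintro ⟨⟨h1, h2, h3⟩, h4, h5⟩
    exact ⟨⟨h1, subset_range_succ_iff.mp ⟨h2, h5⟩, h3⟩, h4⟩
  · rintro ⟨⟨h1, h2, h3⟩, h4⟩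
    have := subset_range_succ_iff.mpr h2
    exact ⟨⟨h1, this.1, h3⟩, h4, this.2⟩

lemma G_insert_part (a b : ℕ) :
    ∑ p ∈ (PP (a+1) (b+1)).filter (fun p => b ∈ p.1 ∧ a ∈ p.2),
        xx ^ p.1.card * qq ^ (p.1.card + (∑ i ∈ p.1, i) + ∑ i ∈ p.2, i)
      = xx * qq ^ (a+b+1) * G a b := by
  rw [G, Finset.mul_sum]
  refine Finset.sum_nbij' (fun p => (p.1.erase b, p.2.erase a))
    (fun p => (insert b p.1, insert a p.2)) ?_ ?_ ?_ ?_ ?_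
  · intro p hp
    rw [Finset.mem_filter, PP_mem] at hp
    obtain ⟨⟨h1, h2, h3⟩, h4, h5⟩ := hp
    rw [PP_mem]
    refine ⟨?_, ?_, ?_⟩
    · intro x hx
      rw [Finset.mem_erase] at hx
      have := h1 hx.2
      rw [Finset.mem_range] at this ⊢
      omega
    · intro x hx
      rw [Finset.mem_erase] at hx
      have := h2 hx.2
      rw [Finset.mem_range] at this ⊢
      omega
    · rw [Finset.card_erase_of_mem h4, Finset.card_erase_of_mem h5, h3]
  · intro p hp
    rw [PP_mem] at hp
    obtain ⟨h1, h2, h3⟩ := hp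
    have hb : b ∉ p.1 := fun h => by simpa using (Finset.mem_range.mp (h1 h))
    have ha : a ∉ p.2 := fun h => by simpa using (Finset.mem_range.mp (h2 h))
    rw [Finset.mem_filter, PP_mem]
    refine ⟨⟨?_, ?_, ?_⟩, Finset.mem_insert_self _ _, Finset.mem_insert_self _ _⟩
    · intro x hx
      rw [Finset.mem_insert] at hx
      rcases hx with rfl | hx
      · simp
      · have := h1 hx; rw [Finset.mem_range] at this ⊢; omega
    · intro x hx
      rw [Finset.mem_insert] at hx
      rcases hx with rfl | hx
      · simp
      · have := h2 hx; rw [Finset.mem_range] at this ⊢; omega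
    · rw [Finset.card_insert_of_notMem hb, Finset.card_insert_of_notMem ha, h3]
  · intro p hp
    rw [Finset.mem_filter] at hp
    exact Prod.ext (Finset.insert_erase hp.2.1) (Finset.insert_erase hp.2.2)
  · intro p hp
    rw [PP_mem] at hp
    obtain ⟨h1, h2, _⟩ := hp
    have hb : b ∉ p.1 := fun h => by simpa using (Finset.mem_range.mp (h1 h))
    have ha : a ∉ p.2 := fun h => by simpa using (Finset.mem_range.mp (h2 h))
    exact Prod.ext (Finset.erase_insert hb) (Finset.erase_insert ha)
  · intro p hp
    rw [Finset.mem_filter, PP_mem] at hp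
    obtain ⟨⟨h1, h2, h3⟩, h4, h5⟩ := hp
    have hb : b ∉ p.1.erase b := Finset.notMem_erase _ _
    have ha : a ∉ p.2.erase a := Finset.notMem_erase _ _
    have e1 : insert b (p.1.erase b) = p.1 := Finset.insert_erase h4
    have e2 : insert a (p.2.erase a) = p.2 := Finset.insert_erase h5
    have ec : p.1.card = (p.1.erase b).card + 1 := by
      rw [Finset.card_erase_of_mem h4]
      have : 0 < p.1.card := Finset.card_pos.mpr ⟨b, h4⟩
      omega
    have es1 : ∑ i ∈ p.1, i = b + ∑ i ∈ p.1.erase b, i := by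
      conv_lhs => rw [← e1]
      rw [Finset.sum_insert hb]
    have es2 : ∑ i ∈ p.2, i = a + ∑ i ∈ p.2.erase a, i := by
      conv_lhs => rw [← e2]
      rw [Finset.sum_insert ha]
    rw [ec, es1, es2]
    have hexp : (p.1.erase b).card + 1 + (b + ∑ i ∈ p.1.erase b, i) + (a + ∑ i ∈ p.2.erase a, i)
        = ((p.1.erase b).card + (∑ i ∈ p.1.erase b, i) + ∑ i ∈ p.2.erase a, i) + (a+b+1) := by
      ring
    rw [hexp, pow_add, pow_succ]
    ring

lemma G_succ_succ (a b : ℕ) :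
    G (a+1) (b+1) = G (a+1) b + G a (b+1) + xx * qq ^ (a+b+1) * G a b - G a b := by
  classical
  have e1 : G (a+1) (b+1)
      = (∑ p ∈ (PP (a+1) (b+1)).filter (fun p => b ∈ p.1),
          xx ^ p.1.card * qq ^ (p.1.card + (∑ i ∈ p.1, i) + ∑ i ∈ p.2, i))
        + ∑ p ∈ (PP (a+1) (b+1)).filter (fun p => ¬ b ∈ p.1),
          xx ^ p.1.card * qq ^ (p.1.card + (∑ i ∈ p.1, i) + ∑ i ∈ p.2, i) := by
    rw [G, Finset.sum_filter_add_sum_filter_not]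
  have e2 : (PP (a+1) (b+1)).filter (fun p => ¬ b ∈ p.1) = PP (a+1) b := filter_PP_left
  have e3 : ∑ p ∈ (PP (a+1) (b+1)).filter (fun p => b ∈ p.1),
        xx ^ p.1.card * qq ^ (p.1.card + (∑ i ∈ p.1, i) + ∑ i ∈ p.2, i)
      = (∑ p ∈ (PP (a+1) (b+1)).filter (fun p => b ∈ p.1 ∧ a ∈ p.2),
          xx ^ p.1.card * qq ^ (p.1.card + (∑ i ∈ p.1, i) + ∑ i ∈ p.2, i))
        + ∑ p ∈ (PP (a+1) (b+1)).filter (fun p => b ∈ p.1 ∧ ¬ a ∈ p.2),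
          xx ^ p.1.card * qq ^ (p.1.card + (∑ i ∈ p.1, i) + ∑ i ∈ p.2, i) := by
    rw [← Finset.sum_filter_add_sum_filter_not ((PP (a+1) (b+1)).filter (fun p => b ∈ p.1))
      (fun p => a ∈ p.2), Finset.filter_filter, Finset.filter_filter]
  have e4 : (PP (a+1) (b+1)).filter (fun p => b ∈ p.1 ∧ ¬ a ∈ p.2)
      = (PP a (b+1)).filter (fun p => b ∈ p.1) := filter_PP_both
  have e5 : ∑ p ∈ (PP a (b+1)).filter (fun p => b ∈ p.1),
        xx ^ p.1.card * qq ^ (p.1.card + (∑ i ∈ p.1, i) + ∑ i ∈ p.2, i)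
      = G a (b+1) - G a b := by
    have h := Finset.sum_filter_add_sum_filter_not (PP a (b+1)) (fun p => b ∈ p.1)
      (fun p => xx ^ p.1.card * qq ^ (p.1.card + (∑ i ∈ p.1, i) + ∑ i ∈ p.2, i))
    rw [show (PP a (b+1)).filter (fun p => ¬ b ∈ p.1) = PP a b from filter_PP_left] at h
    have d1 : G a (b+1) = ∑ p ∈ PP a (b+1),
        xx ^ p.1.card * qq ^ (p.1.card + (∑ i ∈ p.1, i) + ∑ i ∈ p.2, i) := rfl
    have d2 : G a b = ∑ p ∈ PP a b,
        xx ^ p.1.card * qq ^ (p.1.card + (∑ i ∈ p.1, i) + ∑ i ∈ p.2, i) := rfl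
    rw [d1, d2, eq_sub_iff_add_eq, h]
  have d3 : G (a+1) b = ∑ p ∈ PP (a+1) b,
      xx ^ p.1.card * qq ^ (p.1.card + (∑ i ∈ p.1, i) + ∑ i ∈ p.2, i) := rfl
  rw [e1, e2, e3, e4, e5, G_insert_part, ← d3]
  ring

/-! #### `F = G` -/

lemma F_eq_G (a b : ℕ) : F a b = G a b := by
  induction a generalizing b with
  | zero => rw [F_zero_b, G_zero_b]
  | succ a iha =>
    induction b with
    | zero => rw [F_a_zero, G_a_zero]
    | succ b ihb =>
      rw [F_succ_succ, G_succ_succ, iha, iha, ihb]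

/-! #### the reflection map -/

/-- reflection of a subset of `range r` -/
def rho (r : ℕ) (X : Finset ℕ) : Finset ℕ := X.image (fun t => r - 1 - t)

lemma rho_subset {r : ℕ} (hr : 1 ≤ r) (X : Finset ℕ) : rho r X ⊆ range r := by
  intro y hy
  rw [rho, Finset.mem_image] at hy
  obtain ⟨t, _, rfl⟩ := hy
  rw [Finset.mem_range]
  omega

lemma rho_card {r : ℕ} {X : Finset ℕ} (hX : X ⊆ range r) : (rho r X).card = X.card := by
  rw [rho]
  apply Finset.card_image_of_injOn
  intro t1 h1 t2 h2 h
  simp only at h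
  have := Finset.mem_range.mp (hX h1)
  have := Finset.mem_range.mp (hX h2)
  omega

lemma mem_rho {r y : ℕ} {X : Finset ℕ} (hX : X ⊆ range r) :
    y ∈ rho r X ↔ y < r ∧ r - 1 - y ∈ X := by
  rw [rho, Finset.mem_image]
  constructor
  · rintro ⟨t, ht, rfl⟩
    have := Finset.mem_range.mp (hX ht)
    constructor
    · omega
    · have : r - 1 - (r - 1 - t) = t := by omega
      rw [this]; exact ht
  · rintro ⟨h1, h2⟩
    refine ⟨r - 1 - y, h2, ?_⟩
    have := Finset.mem_range.mp (hX h2)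
    omega

lemma rho_sum {r : ℕ} {X : Finset ℕ} (hX : X ⊆ range r) :
    (∑ i ∈ rho r X, i) + (∑ i ∈ X, i) + X.card = X.card * r := by
  have h1 : ∑ i ∈ rho r X, i = ∑ t ∈ X, (r - 1 - t) := by
    rw [rho]
    apply Finset.sum_image
    intro t1 h1 t2 h2 h
    simp only at h
    have := Finset.mem_range.mp (hX h1)
    have := Finset.mem_range.mp (hX h2)
    omega
  rw [h1, ← Finset.sum_add_distrib]
  have h2 : ∑ t ∈ X, (r - 1 - t + t) = ∑ t ∈ X, (r - 1) := by
    apply Finset.sum_congr rfl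
    intro t ht
    have := Finset.mem_range.mp (hX ht)
    omega
  rw [h2, Finset.sum_const, smul_eq_mul]
  have hcard := Finset.card_le_card hX
  rw [Finset.card_range] at hcard
  rcases Nat.eq_zero_or_pos r with rfl | hrpos
  · have hz : X.card = 0 := by omega
    simp [hz]
  · have e : r - 1 + 1 = r := by omega
    calc X.card * (r-1) + X.card = X.card * (r - 1 + 1) := by rw [Nat.mul_succ]
    _ = X.card * r := by rw [e]

lemma rho_compl_compl {r : ℕ} (_hr : 1 ≤ r) {X : Finset ℕ} (hX : X ⊆ range r) :
    range r \ rho r (range r \ rho r X) = X := by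
  have hsub1 : range r \ rho r X ⊆ range r := Finset.sdiff_subset
  ext y
  constructor
  · intro hy
    rw [Finset.mem_sdiff] at hy
    obtain ⟨hy1, hy2⟩ := hy
    rw [mem_rho hsub1] at hy2
    push_neg at hy2
    have hylt : y < r := Finset.mem_range.mp hy1
    have := hy2 hylt
    rw [Finset.mem_sdiff] at this
    push_neg at this
    have hr1y : r - 1 - y ∈ range r := Finset.mem_range.mpr (by omega)
    have := this hr1y
    rw [mem_rho hX] at this
    obtain ⟨_, h2⟩ := this
    have e : r - 1 - (r - 1 - y) = y := by omega
    rwa [e] at h2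
  · intro hy
    have hylt : y < r := Finset.mem_range.mp (hX hy)
    rw [Finset.mem_sdiff]
    refine ⟨Finset.mem_range.mpr hylt, ?_⟩
    rw [mem_rho hsub1]
    push_neg
    intro _
    rw [Finset.mem_sdiff]
    push_neg
    intro _
    rw [mem_rho hX]
    refine ⟨by omega, ?_⟩
    have e : r - 1 - (r - 1 - y) = y := by omega
    rw [e]
    exact hy

/-! #### divisibility of a matched pair -/

lemma sum_range_sq (r : ℕ) : (∑ i ∈ range r, i) * 2 + r = r * r := by
  rw [Finset.sum_range_id_mul_two]
  cases r with
  | zero => rfl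
  | succ m =>
    rw [Nat.add_sub_cancel]
    ring

lemma pair_dvd_lt {r : ℕ} (hr : Odd r) {S T : Finset ℕ} (hS : S ⊆ range r) (hT : T ⊆ range r)
    (hc : S.card = T.card) (hlt : 2 * S.card < r) :
    (1 + xx * qq ^ r) ∣
      xx ^ S.card * qq ^ (S.card + (∑ i ∈ S, i) + ∑ i ∈ T, i)
        + xx ^ (range r \ rho r T).card
            * qq ^ ((range r \ rho r T).card + (∑ i ∈ range r \ rho r T, i)
                + ∑ i ∈ range r \ rho r S, i) := by
  have hr1 : 1 ≤ r := hr.pos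
  obtain ⟨d, hd⟩ : ∃ d, r = 2 * S.card + d := ⟨r - 2 * S.card, by omega⟩
  have hd_odd : Odd d := by
    rcases hr with ⟨m, hm⟩
    exact ⟨m - S.card, by omega⟩
  have c1 : (range r \ rho r T).card = S.card + d := by
    rw [Finset.card_sdiff_of_subset (rho_subset hr1 T), Finset.card_range, rho_card hT, ← hc]
    omega
  have h1 := rho_sum hT
  rw [← hc] at h1
  have h2 := rho_sum hS
  have h3 := Finset.sum_sdiff (f := fun i => i) (rho_subset hr1 T)
  have h4 := Finset.sum_sdiff (f := fun i => i) (rho_subset hr1 S)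
  have h5 := sum_range_sq r
  have hE : (S.card + d) + ((∑ i ∈ range r \ rho r T, i) + ∑ i ∈ range r \ rho r S, i)
      = (S.card + (∑ i ∈ S, i) + ∑ i ∈ T, i) + r * d := by
    zify at h1 h2 h3 h4 h5 hd ⊢
    linear_combination h3 + h4 - h1 - h2 + h5 + ((r : ℤ) - 1) * hd
  have hterm : xx ^ (range r \ rho r T).card
        * qq ^ ((range r \ rho r T).card + (∑ i ∈ range r \ rho r T, i)
            + ∑ i ∈ range r \ rho r S, i)
      = (xx ^ S.card * qq ^ (S.card + (∑ i ∈ S, i) + ∑ i ∈ T, i)) * (xx * qq ^ r) ^ d := by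
    rw [c1]
    have e : S.card + d + (∑ i ∈ range r \ rho r T, i) + (∑ i ∈ range r \ rho r S, i)
        = (S.card + (∑ i ∈ S, i) + ∑ i ∈ T, i) + r * d := by
      rw [← hE]; ring
    rw [e, pow_add, pow_add, mul_pow, ← pow_mul]
    ring
  rw [hterm]
  have hfac : xx ^ S.card * qq ^ (S.card + (∑ i ∈ S, i) + ∑ i ∈ T, i)
        + xx ^ S.card * qq ^ (S.card + (∑ i ∈ S, i) + ∑ i ∈ T, i) * (xx * qq ^ r) ^ d
      = (xx ^ S.card * qq ^ (S.card + (∑ i ∈ S, i) + ∑ i ∈ T, i))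
          * (1 + (xx * qq ^ r) ^ d) := by
    ring
  rw [hfac]
  have hdvd : (1 + xx * qq ^ r) ∣ (1 + (xx * qq ^ r) ^ d) := by
    have := Odd.add_dvd_pow_add_pow (1 : MvPolynomial (Fin 2) ℤ) (xx * qq ^ r) hd_odd
    rwa [one_pow] at this
  exact Dvd.dvd.mul_left hdvd _

/-! #### the involution: divisibility of `G r r` -/

lemma dvd_G {r : ℕ} (hr : Odd r) : (1 + xx * qq ^ r) ∣ G r r := by
  classical
  have hr1 : 1 ≤ r := hr.pos
  rw [← Ideal.mem_span_singleton (α := MvPolynomial (Fin 2) ℤ)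
    (y := 1 + xx * qq ^ r), ← Ideal.Quotient.eq_zero_iff_mem, G, map_sum]
  refine Finset.sum_involution
    (fun p _ => ((range r \ rho r p.2, range r \ rho r p.1) : Finset ℕ × Finset ℕ))
    ?_ ?_ ?_ ?_
  · -- pair sums vanish
    intro p hp
    dsimp only
    rw [PP_mem] at hp
    obtain ⟨hS, hT, hc⟩ := hp
    rw [← map_add, Ideal.Quotient.eq_zero_iff_mem, Ideal.mem_span_singleton]
    have hne : 2 * p.1.card ≠ r := by
      rcases hr with ⟨m, hm⟩
      omega
    rcases Nat.lt_or_ge (2 * p.1.card) r with hlt | hge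
    · exact pair_dvd_lt hr hS hT hc hlt
    · have hgt : r < 2 * p.1.card := by omega
      have hS' : range r \ rho r p.2 ⊆ range r := Finset.sdiff_subset
      have hT' : range r \ rho r p.1 ⊆ range r := Finset.sdiff_subset
      have hcS : p.1.card ≤ r := by
        have := Finset.card_le_card hS
        rwa [Finset.card_range] at this
      have hc' : (range r \ rho r p.2).card = (range r \ rho r p.1).card := by
        rw [Finset.card_sdiff_of_subset (rho_subset hr1 p.2), Finset.card_sdiff_of_subset (rho_subset hr1 p.1),
          rho_card hT, rho_card hS, hc]
      have hlt' : 2 * (range r \ rho r p.2).card < r := by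
        rw [Finset.card_sdiff_of_subset (rho_subset hr1 p.2), Finset.card_range, rho_card hT, ← hc]
        omega
      have key := pair_dvd_lt hr hS' hT' hc' hlt'
      rw [rho_compl_compl hr1 hS, rho_compl_compl hr1 hT] at key
      obtain ⟨c, hc2⟩ := key
      exact ⟨c, by rw [← hc2]; ring⟩
  · -- no fixed points
    intro p hp _
    rw [PP_mem] at hp
    obtain ⟨hS, hT, hc⟩ := hp
    intro heq
    have h1 : (range r \ rho r p.2) = p.1 := congrArg Prod.fst heq
    have hcard : (range r \ rho r p.2).card = p.1.card := by rw [h1]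
    rw [Finset.card_sdiff_of_subset (rho_subset hr1 p.2), Finset.card_range, rho_card hT, ← hc] at hcard
    have hcS : p.1.card ≤ r := by
      have := Finset.card_le_card hS
      rwa [Finset.card_range] at this
    rcases hr with ⟨m, hm⟩
    omega
  · -- maps into the set
    intro p hp
    rw [PP_mem] at hp
    obtain ⟨hS, hT, hc⟩ := hp
    rw [PP_mem]
    refine ⟨Finset.sdiff_subset, Finset.sdiff_subset, ?_⟩
    rw [Finset.card_sdiff_of_subset (rho_subset hr1 p.2), Finset.card_sdiff_of_subset (rho_subset hr1 p.1),
      rho_card hT, rho_card hS, hc]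
  · -- involutive
    intro p hp
    dsimp only
    rw [PP_mem] at hp
    obtain ⟨hS, hT, hc⟩ := hp
    exact Prod.ext (rho_compl_compl hr1 hS) (rho_compl_compl hr1 hT)

end Prop213

/-- **Proposition 2.13 (divisibility part)**: for odd `r`, `1 + x q^r` divides
`C_{r,2}(x,q)` in `ℤ[x,q]` (with `x = X 0`, `q = X 1` in `MvPolynomial (Fin 2) ℤ`). -/
theorem one_add_xqr_divides_C_r2 (r : ℕ) (hr : Odd r) :
    ∃ C' : MvPolynomial (Fin 2) ℤ,
      ∑ w ∈ multisetPerms (2 * r) 2 (fun _ => r),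
          (MvPolynomial.X 0 : MvPolynomial (Fin 2) ℤ) ^ des w * (MvPolynomial.X 1) ^ maj w =
        (1 + (MvPolynomial.X 0 : MvPolynomial (Fin 2) ℤ) * (MvPolynomial.X 1) ^ r) * C' := by
  obtain ⟨C', hC'⟩ := Prop213.dvd_G hr
  refine ⟨C', ?_⟩
  have hlam : Prop213.lamAB r r = (fun _ : Fin 2 => r) := by
    funext i
    simp [Prop213.lamAB]
  have hsum : (∑ w ∈ multisetPerms (2 * r) 2 (fun _ => r),
        (MvPolynomial.X 0 : MvPolynomial (Fin 2) ℤ) ^ des w * (MvPolynomial.X 1) ^ maj w)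
      = Prop213.F r r := by
    rw [Prop213.F, hlam]
    exact Prop213.sum_MP_congr (two_mul r) _
      (fun K w => (MvPolynomial.X 0 : MvPolynomial (Fin 2) ℤ) ^ des w
        * (MvPolynomial.X 1) ^ maj w)
  rw [hsum, Prop213.F_eq_G]
  exact hC'
end

section
/- Lemma 3.1: for every prime p and all r ∈ ℕ, k ∈ ℕ₀, the number of subgroups H of ℤ^r with index [ℤ^r : H] = p^k equals the Gaussian binomial coefficient binom(r−1+k, k)_q evaluated at q = p. -/
open Finset



lemma prodShift (q : ℤ) (s k : ℕ) :
    (∏ i ∈ Ioc 0 k, (q ^ (s + i) - 1)) * (q ^ (s + k + 1) - 1)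
      = (∏ i ∈ Ioc 0 k, (q ^ (s + 1 + i) - 1)) * (q ^ (s + 1) - 1) := by
  induction k with
  | zero => simp
  | succ k ih =>
    rw [Finset.prod_Ioc_succ_top (Nat.zero_le _), Finset.prod_Ioc_succ_top (Nat.zero_le _)]
    have h1 : s + (k + 1) = s + k + 1 := by ring
    have h2 : s + 1 + (k + 1) = s + k + 2 := by ring
    rw [h1, h2]
    have h3 : s + k + 1 + 1 = s + k + 2 := by ring
    rw [h3]
    linear_combination (q ^ (s + k + 2) - 1) * ih

lemma keyT (q : ℤ) (s k : ℕ) :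
    ∑ j ∈ range (k + 1),
        q ^ j * (∏ i ∈ Ioc 0 j, (q ^ (s + i) - 1)) * (∏ i ∈ Ioc j k, (q ^ i - 1))
      = ∏ i ∈ Ioc 0 k, (q ^ (s + 1 + i) - 1) := by
  induction k with
  | zero => simp
  | succ k ih =>
    rw [Finset.sum_range_succ, Finset.prod_Ioc_succ_top (Nat.zero_le _),
      Finset.prod_Ioc_succ_top (Nat.zero_le _)]
    have hsum : ∑ j ∈ range (k + 1),
        q ^ j * (∏ i ∈ Ioc 0 j, (q ^ (s + i) - 1)) * (∏ i ∈ Ioc j (k + 1), (q ^ i - 1))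
        = (∑ j ∈ range (k + 1),
            q ^ j * (∏ i ∈ Ioc 0 j, (q ^ (s + i) - 1)) * (∏ i ∈ Ioc j k, (q ^ i - 1)))
            * (q ^ (k + 1) - 1) := by
      rw [Finset.sum_mul]
      refine Finset.sum_congr rfl fun j hj => ?_
      rw [Finset.mem_range] at hj
      rw [Finset.prod_Ioc_succ_top (Nat.lt_succ_iff.mp hj)]
      ring
    rw [hsum, ih, Finset.Ioc_self, Finset.prod_empty]
    have h1 : s + (k + 1) = s + k + 1 := by ring
    rw [h1]
    have := prodShift q s k
    linear_combination q ^ (k + 1) * this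

open Finset



section Mult
variable {A B : Type*} [AddCommGroup A] [AddCommGroup B]

lemma index_prod (H : AddSubgroup (A × B)) :
    H.index = (H.map (AddMonoidHom.snd A B)).index * (H.comap (AddMonoidHom.inl A B)).index := by
  classical
  set I := H.map (AddMonoidHom.snd A B) with hI
  set K := H.comap (AddMonoidHom.inl A B) with hK
  have hle : H ≤ I.comap (AddMonoidHom.snd A B) :=
    fun x hx => AddSubgroup.mem_comap.mpr (AddSubgroup.mem_map_of_mem _ hx)
  let θ : (A × B) ⧸ H →+ B ⧸ I := QuotientAddGroup.map H I (AddMonoidHom.snd A B) hle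
  have hθ : Function.Surjective θ := by
    intro q
    induction q using QuotientAddGroup.induction_on with
    | H b => exact ⟨QuotientAddGroup.mk (0, b), rfl⟩
  let α : A →+ (A × B) ⧸ H := (QuotientAddGroup.mk' H).comp (AddMonoidHom.inl A B)
  have hker : α.ker = K := by
    ext a
    simp [α, AddMonoidHom.mem_ker, QuotientAddGroup.mk'_apply, QuotientAddGroup.eq_zero_iff,
      hK, AddSubgroup.mem_comap]
  have hrange : α.range = θ.ker := by
    ext q
    induction q using QuotientAddGroup.induction_on with
    | H x =>
      obtain ⟨a, b⟩ := x
      constructor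
      · rintro ⟨a', ha'⟩
        have : θ (α a') = 0 := by
          show QuotientAddGroup.mk ((0 : B)) = 0
          simp
        rw [ha'] at this
        exact this
      · intro hq
        have hb : b ∈ I := by
          have : θ (QuotientAddGroup.mk (a, b)) = QuotientAddGroup.mk b := rfl
          rw [AddMonoidHom.mem_ker, this, QuotientAddGroup.eq_zero_iff] at hq
          exact hq
        obtain ⟨x, hxH, hx2⟩ := hb
        refine ⟨a - x.1, ?_⟩
        show QuotientAddGroup.mk ((a - x.1, 0) : A × B) = QuotientAddGroup.mk (a, b)
        rw [QuotientAddGroup.eq]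
        have : -((a - x.1, (0 : B)) : A × B) + (a, b) = (x.1, b) := by
          ext <;> simp
        rw [this]
        have : ((x.1, b) : A × B) = x := by
          ext
          · rfl
          · exact hx2.symm
        rwa [this]
  have step1 : H.index = Nat.card ((A × B) ⧸ H) := AddSubgroup.index_eq_card H
  have step2 : Nat.card ((A × B) ⧸ H) = Nat.card (((A × B) ⧸ H) ⧸ θ.ker) * Nat.card θ.ker :=
    AddSubgroup.card_eq_card_quotient_mul_card_addSubgroup θ.ker
  have step3 : Nat.card (((A × B) ⧸ H) ⧸ θ.ker) = I.index := by
    rw [AddSubgroup.index_eq_card]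
    exact Nat.card_congr (QuotientAddGroup.quotientKerEquivOfSurjective θ hθ).toEquiv
  have step4 : Nat.card θ.ker = K.index := by
    rw [← hrange, AddSubgroup.index_eq_card, ← hker]
    exact (Nat.card_congr (QuotientAddGroup.quotientKerEquivRange α).toEquiv).symm
  rw [step1, step2, step3, step4]

end Mult

section IntSub

lemma int_subgroup_eq_of_index {H : AddSubgroup ℤ} {n : ℕ} (hn : n ≠ 0) (h : H.index = n) :
    H = AddSubgroup.zmultiples (n : ℤ) := by
  obtain ⟨a, ha⟩ := Int.subgroup_cyclic H
  have hza : H = AddSubgroup.zmultiples a := by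
    rw [ha, AddSubgroup.zmultiples_eq_closure]
  rw [hza] at h ⊢
  rw [Int.index_zmultiples] at h
  rw [← h, Int.zmultiples_natAbs]

end IntSub

section Hmk

variable {A : Type*} [AddCommGroup A]

/-- The subgroup of `A × ℤ` generated by `K × 0` and `(v, m)`. -/
def Hmk (K : AddSubgroup A) (m : ℤ) (v : A) : AddSubgroup (A × ℤ) where
  carrier := {x | ∃ t : ℤ, x.2 = t * m ∧ x.1 - t • v ∈ K}
  zero_mem' := ⟨0, by simp, by simpa using K.zero_mem⟩
  add_mem' := by
    rintro x y ⟨t, ht, hx⟩ ⟨u, hu, hy⟩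
    refine ⟨t + u, by simp [ht, hu, add_mul], ?_⟩
    have h := K.add_mem hx hy
    have : x.1 - t • v + (y.1 - u • v) = (x + y).1 - (t + u) • v := by
      simp [add_smul]; abel
    rwa [this] at h
  neg_mem' := by
    rintro x ⟨t, ht, hx⟩
    refine ⟨-t, by simp [ht], ?_⟩
    have h := K.neg_mem hx
    have : -(x.1 - t • v) = (-x).1 - (-t) • v := by
      simp; abel
    rwa [this] at h

lemma mem_Hmk {K : AddSubgroup A} {m : ℤ} {v : A} {x : A × ℤ} :
    x ∈ Hmk K m v ↔ ∃ t : ℤ, x.2 = t * m ∧ x.1 - t • v ∈ K := Iff.rfl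

lemma Hmk_comap_inl {K : AddSubgroup A} {m : ℤ} (hm : m ≠ 0) (v : A) :
    (Hmk K m v).comap (AddMonoidHom.inl A ℤ) = K := by
  ext a
  simp only [AddSubgroup.mem_comap, AddMonoidHom.inl_apply, mem_Hmk]
  constructor
  · rintro ⟨t, ht, hx⟩
    have : t = 0 := by
      rcases mul_eq_zero.mp ht.symm with h | h
      · exact h
      · exact absurd h hm
    subst this
    simpa using hx
  · intro ha
    exact ⟨0, by simp, by simpa using ha⟩

lemma Hmk_map_snd (K : AddSubgroup A) (m : ℤ) (v : A) :
    (Hmk K m v).map (AddMonoidHom.snd A ℤ) = AddSubgroup.zmultiples m := by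
  ext b
  simp only [AddSubgroup.mem_map, AddMonoidHom.coe_snd, AddSubgroup.mem_zmultiples_iff]
  constructor
  · rintro ⟨x, ⟨t, ht, hx⟩, rfl⟩
    exact ⟨t, by simpa using ht.symm⟩
  · rintro ⟨t, ht⟩
    refine ⟨(t • v, t * m), ⟨t, rfl, by simpa using K.zero_mem⟩, ?_⟩
    simpa using ht

lemma Hmk_congr {K : AddSubgroup A} {m : ℤ} {v v' : A} (h : v - v' ∈ K) :
    Hmk K m v = Hmk K m v' := by
  have key : ∀ w w' : A, w - w' ∈ K → Hmk K m w ≤ Hmk K m w' := by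
    rintro w w' hw x ⟨t, ht, hx⟩
    refine ⟨t, ht, ?_⟩
    have h2 : x.1 - t • w + t • (w - w') = x.1 - t • w' := by
      rw [smul_sub]; abel
    rw [← h2]
    exact K.add_mem hx (AddSubgroup.zsmul_mem K hw t)
  exact le_antisymm (key v v' h) (key v' v (by simpa using K.neg_mem h))

lemma Hmk_inj {K : AddSubgroup A} {m : ℤ} (hm : m ≠ 0) {v v' : A}
    (h : Hmk K m v = Hmk K m v') : v - v' ∈ K := by
  have hv : (v, m) ∈ Hmk K m v := ⟨1, by simp, by simp [K.zero_mem]⟩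
  rw [h] at hv
  obtain ⟨t, ht, hx⟩ := hv
  have : t = 1 := by
    have h2 : (t - 1) * m = 0 := by linear_combination -ht
    rcases mul_eq_zero.mp h2 with h3 | h3
    · have := sub_eq_zero.mp h3
      linarith
    · exact absurd h3 hm
  subst this
  simpa using hx

lemma Hmk_index {K : AddSubgroup A} {m : ℤ} (hm : m ≠ 0) (v : A) :
    (Hmk K m v).index = m.natAbs * K.index := by
  rw [index_prod, Hmk_map_snd, Hmk_comap_inl hm, Int.index_zmultiples]

lemma Hmk_surj {H : AddSubgroup (A × ℤ)} {m : ℤ} (hm : m ≠ 0)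
    (hmap : H.map (AddMonoidHom.snd A ℤ) = AddSubgroup.zmultiples m)
    {v : A} (hv : (v, m) ∈ H) :
    H = Hmk (H.comap (AddMonoidHom.inl A ℤ)) m v := by
  ext x
  constructor
  · intro hx
    have hb : x.2 ∈ AddSubgroup.zmultiples m := by
      rw [← hmap]
      exact ⟨x, hx, rfl⟩
    obtain ⟨t, ht⟩ := AddSubgroup.mem_zmultiples_iff.mp hb
    refine ⟨t, by simpa using ht.symm, ?_⟩
    show ((x.1 - t • v, 0) : A × ℤ) ∈ H
    have : ((x.1 - t • v, 0) : A × ℤ) = x - t • (v, m) := by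
      ext
      · simp
      · simp [← ht]
    rw [this]
    exact H.sub_mem hx (AddSubgroup.zsmul_mem H hv t)
  · rintro ⟨t, ht, hx⟩
    have hx' : ((x.1 - t • v, 0) : A × ℤ) ∈ H := hx
    have : x = (x.1 - t • v, (0 : ℤ)) + t • (v, m) := by
      ext
      · simp
      · simp [ht]
    rw [this]
    exact H.add_mem hx' (AddSubgroup.zsmul_mem H hv t)

end Hmk
section Count

open Finset

variable {A : Type*} [AddCommGroup A]

lemma nat_card_sigma {ι : Type*} [Fintype ι] (f : ι → Type*) [hf : ∀ i, Finite (f i)] :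
    Nat.card (Σ i, f i) = ∑ i : ι, Nat.card (f i) := by
  letI := fun i => Fintype.ofFinite (f i)
  simp only [Nat.card_eq_fintype_card]
  exact Fintype.card_sigma

/-- `Hmk` descended to the quotient `A ⧸ K`. -/
def HmkQ (K : AddSubgroup A) (m : ℤ) (c : A ⧸ K) : AddSubgroup (A × ℤ) :=
  Quotient.liftOn' c (fun v => Hmk K m v) (fun a b h => by
    rw [QuotientAddGroup.leftRel_apply] at h
    refine Hmk_congr ?_
    have : a - b = -(-a + b) := by abel
    rw [this]
    exact K.neg_mem h)

lemma HmkQ_mk (K : AddSubgroup A) (m : ℤ) (v : A) :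
    HmkQ K m (QuotientAddGroup.mk v) = Hmk K m v := rfl

lemma card_step (p k : ℕ) (hp : p.Prime)
    (hfin : ∀ j : ℕ, Finite {K : AddSubgroup A // K.index = p ^ j}) :
    Finite {H : AddSubgroup (A × ℤ) // H.index = p ^ k} ∧
      Nat.card {H : AddSubgroup (A × ℤ) // H.index = p ^ k}
        = ∑ j ∈ Finset.range (k + 1), p ^ j * Nat.card {K : AddSubgroup A // K.index = p ^ j} := by
  classical
  have hpz : ∀ e : ℕ, ((p : ℤ) ^ e) ≠ 0 := fun e =>
    pow_ne_zero e (by exact_mod_cast hp.ne_zero)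
  have hnatAbs : ∀ e : ℕ, ((p : ℤ) ^ e).natAbs = p ^ e := by
    intro e
    rw [Int.natAbs_pow]
    simp
  -- the parameter space
  set S := (Σ j : Fin (k + 1), Σ K : {K : AddSubgroup A // K.index = p ^ (j : ℕ)},
      A ⧸ (K.1 : AddSubgroup A)) with hS
  -- the map
  have hidx : ∀ (j : Fin (k + 1)) (K : {K : AddSubgroup A // K.index = p ^ (j : ℕ)})
      (c : A ⧸ (K.1 : AddSubgroup A)),
      (HmkQ K.1 ((p : ℤ) ^ (k - (j : ℕ))) c).index = p ^ k := by
    intro j K c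
    induction c using QuotientAddGroup.induction_on with
    | H v =>
      rw [HmkQ_mk, Hmk_index (hpz _), hnatAbs, K.2, ← pow_add]
      congr 1
      have := j.is_lt
      omega
  let Ψ : S → {H : AddSubgroup (A × ℤ) // H.index = p ^ k} :=
    fun s => ⟨HmkQ s.2.1.1 ((p : ℤ) ^ (k - (s.1 : ℕ))) s.2.2, hidx s.1 s.2.1 s.2.2⟩
  have hbij : Function.Bijective Ψ := by
    constructor
    · rintro ⟨j, K, c⟩ ⟨j', K', c'⟩ h
      induction c using QuotientAddGroup.induction_on with
      | H v =>
      induction c' using QuotientAddGroup.induction_on with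
      | H v' =>
      have heq : Hmk K.1 ((p : ℤ) ^ (k - (j : ℕ))) v
          = Hmk K'.1 ((p : ℤ) ^ (k - (j' : ℕ))) v' := by
        have := Subtype.ext_iff.mp h
        simpa [Ψ, HmkQ_mk] using this
      -- j = j'
      have hjj : j = j' := by
        have h1 := congrArg (fun H => (AddSubgroup.map (AddMonoidHom.snd A ℤ) H).index) heq
        simp only [Hmk_map_snd, Int.index_zmultiples, hnatAbs] at h1
        have h2 : k - (j : ℕ) = k - (j' : ℕ) := Nat.pow_right_injective hp.two_le h1
        have := j.is_lt
        have := j'.is_lt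
        exact Fin.ext (by omega)
      subst hjj
      -- K = K'
      have hKK : K = K' := by
        apply Subtype.ext
        have h1 := congrArg (fun H => AddSubgroup.comap (AddMonoidHom.inl A ℤ) H) heq
        simpa [Hmk_comap_inl (hpz (k - (j : ℕ)))] using h1
      subst hKK
      -- v ≡ v'
      have hv : v - v' ∈ (K.1 : AddSubgroup A) := Hmk_inj (hpz _) heq
      have hc : (QuotientAddGroup.mk v : A ⧸ (K.1 : AddSubgroup A)) = QuotientAddGroup.mk v' := by
        rw [QuotientAddGroup.eq]
        have : -v + v' = -(v - v') := by abel
        rw [this]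
        exact (K.1 : AddSubgroup A).neg_mem hv
      exact congrArg (fun c => (⟨j, K, c⟩ : S)) hc
    · rintro ⟨H, hH⟩
      set I := H.map (AddMonoidHom.snd A ℤ) with hIdef
      set K := H.comap (AddMonoidHom.inl A ℤ) with hKdef
      have hmul : I.index * K.index = p ^ k := by
        rw [← index_prod H, hH]
      obtain ⟨d, hdk, hd⟩ := (Nat.dvd_prime_pow hp).mp ⟨K.index, hmul.symm⟩
      have hKind : K.index = p ^ (k - d) := by
        have h1 : p ^ d * K.index = p ^ k := by rw [← hd]; exact hmul
        have h2 : p ^ k = p ^ d * p ^ (k - d) := by rw [← pow_add]; congr 1; omega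
        exact Nat.eq_of_mul_eq_mul_left (pow_pos hp.pos d) (by rw [h1, ← h2])
      have hI : I = AddSubgroup.zmultiples ((p ^ d : ℕ) : ℤ) :=
        int_subgroup_eq_of_index (pow_ne_zero d hp.ne_zero) hd
      have hmem : ((p ^ d : ℕ) : ℤ) ∈ I := by
        rw [hI]
        exact AddSubgroup.mem_zmultiples _
      obtain ⟨x, hxH, hx2⟩ := hmem
      have hxv : (x.1, (p : ℤ) ^ d) ∈ H := by
        have : x = (x.1, (p : ℤ) ^ d) := by
          have hc : ((p ^ d : ℕ) : ℤ) = (p : ℤ) ^ d := by push_cast; rfl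
          ext
          · rfl
          · show x.2 = (p : ℤ) ^ d
            rw [← hc, ← hx2]; rfl
        rwa [← this]
      refine ⟨⟨⟨k - d, by omega⟩, ⟨K, by simpa using hKind⟩, QuotientAddGroup.mk x.1⟩, ?_⟩
      apply Subtype.ext
      show HmkQ K ((p : ℤ) ^ (k - (k - d))) (QuotientAddGroup.mk x.1) = H
      rw [HmkQ_mk]
      have hkd : k - (k - d) = d := by omega
      rw [hkd]
      symm
      refine Hmk_surj (hpz d) ?_ hxv
      rw [← hIdef, hI]
      push_cast
      rfl
  -- finiteness
  haveI hfq : ∀ (j : ℕ) (K : {K : AddSubgroup A // K.index = p ^ j}),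
      Finite (A ⧸ (K.1 : AddSubgroup A)) := by
    intro j K
    haveI : (K.1 : AddSubgroup A).FiniteIndex := ⟨by rw [K.2]; exact pow_ne_zero j hp.ne_zero⟩
    infer_instance
  haveI hfib : ∀ j : Fin (k + 1),
      Finite (Σ K : {K : AddSubgroup A // K.index = p ^ (j : ℕ)}, A ⧸ (K.1 : AddSubgroup A)) := by
    intro j
    haveI := hfin (j : ℕ)
    haveI := hfq (j : ℕ)
    infer_instance
  haveI hSfin : Finite S := by infer_instance
  have e := Equiv.ofBijective Ψ hbij
  haveI : Finite {H : AddSubgroup (A × ℤ) // H.index = p ^ k} := Finite.of_equiv S e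
  refine ⟨this, ?_⟩
  rw [← Nat.card_eq_of_bijective Ψ hbij]
  -- compute Nat.card S
  rw [hS]
  rw [nat_card_sigma]
  rw [Fin.sum_univ_eq_sum_range
    (fun j => Nat.card (Σ K : {K : AddSubgroup A // K.index = p ^ j}, A ⧸ (K.1 : AddSubgroup A)))]
  refine Finset.sum_congr rfl fun j hj => ?_
  haveI := hfin j
  haveI := hfq j
  letI := Fintype.ofFinite {K : AddSubgroup A // K.index = p ^ j}
  rw [nat_card_sigma]
  have hcard : ∀ K : {K : AddSubgroup A // K.index = p ^ j},
      Nat.card (A ⧸ (K.1 : AddSubgroup A)) = p ^ j := by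
    intro K
    rw [← AddSubgroup.index_eq_card, K.2]
  rw [Finset.sum_congr rfl fun K _ => hcard K, Finset.sum_const, Nat.card_eq_fintype_card,
    Finset.card_univ, smul_eq_mul, mul_comm]

end Count
section Assemble

open Finset

/-- Transfer of index-`n` subgroup counting along an additive equivalence. -/
def subtypeEquivOfAddEquiv {G G' : Type*} [AddCommGroup G] [AddCommGroup G']
    (e : G ≃+ G') (n : ℕ) :
    {H : AddSubgroup G // H.index = n} ≃ {H : AddSubgroup G' // H.index = n} where
  toFun H := ⟨H.1.comap e.symm.toAddMonoidHom, by
    rw [AddSubgroup.index_comap_of_surjective _ e.symm.surjective]; exact H.2⟩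
  invFun H := ⟨H.1.comap e.toAddMonoidHom, by
    rw [AddSubgroup.index_comap_of_surjective _ e.surjective]; exact H.2⟩
  left_inv H := by
    apply Subtype.ext
    simp only [AddSubgroup.comap_comap]
    have : (e.symm.toAddMonoidHom.comp e.toAddMonoidHom) = AddMonoidHom.id G := by
      ext x; simp
    rw [this, AddSubgroup.comap_id]
  right_inv H := by
    apply Subtype.ext
    simp only [AddSubgroup.comap_comap]
    have : (e.toAddMonoidHom.comp e.symm.toAddMonoidHom) = AddMonoidHom.id G' := by
      ext x; simp
    rw [this, AddSubgroup.comap_id]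

lemma int_card_subgroups {n : ℕ} (hn : n ≠ 0) :
    Nat.card {H : AddSubgroup ℤ // H.index = n} = 1 := by
  rw [Nat.card_eq_one_iff_unique]
  constructor
  · constructor
    rintro ⟨H, hH⟩ ⟨H', hH'⟩
    apply Subtype.ext
    show H = H'
    rw [int_subgroup_eq_of_index hn hH, int_subgroup_eq_of_index hn hH']
  · exact ⟨⟨AddSubgroup.zmultiples (n : ℤ), by rw [Int.index_zmultiples]; simp⟩⟩

lemma int_finite_subgroups (n : ℕ) (hn : n ≠ 0) :
    Finite {H : AddSubgroup ℤ // H.index = n} := by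
  haveI : Subsingleton {H : AddSubgroup ℤ // H.index = n} := by
    constructor
    rintro ⟨H, hH⟩ ⟨H', hH'⟩
    apply Subtype.ext
    show H = H'
    rw [int_subgroup_eq_of_index hn hH, int_subgroup_eq_of_index hn hH']
  exact Finite.of_subsingleton

/-- `Fin 1 → ℤ` is additively equivalent to `ℤ`. -/
def finOneAddEquiv : (Fin 1 → ℤ) ≃+ ℤ :=
  { Equiv.funUnique (Fin 1) ℤ with map_add' := fun _ _ => rfl }

/-- `Fin (r+1) → ℤ` is additively equivalent to `(Fin r → ℤ) × ℤ`. -/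
def finSuccAddEquiv (r : ℕ) : (Fin (r + 1) → ℤ) ≃+ (Fin r → ℤ) × ℤ :=
  { (Fin.consEquiv (fun _ : Fin (r + 1) => ℤ)).symm.trans (Equiv.prodComm ℤ (Fin r → ℤ)) with
    map_add' := fun _ _ => rfl }

/-- The Gaussian-binomial counting sequence (`gaussN p s k` counts index-`p^k`
subgroups of `ℤ^(s+1)`). -/
def gaussN (p : ℕ) : ℕ → ℕ → ℕ
  | 0, _ => 1
  | (s + 1), k => ∑ j ∈ Finset.range (k + 1), p ^ j * gaussN p s j

lemma main_count (p : ℕ) (hp : p.Prime) (s : ℕ) : ∀ k : ℕ,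
    Finite {H : AddSubgroup (Fin (s + 1) → ℤ) // H.index = p ^ k} ∧
      Nat.card {H : AddSubgroup (Fin (s + 1) → ℤ) // H.index = p ^ k} = gaussN p s k := by
  induction s with
  | zero =>
    intro k
    have hn : p ^ k ≠ 0 := pow_ne_zero k hp.ne_zero
    haveI := int_finite_subgroups (p ^ k) hn
    constructor
    · exact Finite.of_equiv _ (subtypeEquivOfAddEquiv finOneAddEquiv.symm (p ^ k))
    · rw [Nat.card_congr (subtypeEquivOfAddEquiv finOneAddEquiv (p ^ k)),
        int_card_subgroups hn]
      rfl
  | succ s ih =>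
    intro k
    have hfin : ∀ j : ℕ, Finite {K : AddSubgroup (Fin (s + 1) → ℤ) // K.index = p ^ j} :=
      fun j => (ih j).1
    obtain ⟨hfinP, hcardP⟩ := card_step p k hp hfin
    have e := subtypeEquivOfAddEquiv (finSuccAddEquiv (s + 1)) (p ^ k)
    constructor
    · exact Finite.of_equiv _ e.symm
    · rw [Nat.card_congr e, hcardP]
      show _ = gaussN p (s + 1) k
      rw [gaussN]
      exact Finset.sum_congr rfl fun j _ => by rw [(ih j).2]

lemma gaussN_identity (p : ℕ) (hp : p.Prime) (s : ℕ) : ∀ k : ℕ,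
    (gaussN p s k : ℤ) * ∏ i ∈ Ioc 0 k, ((p : ℤ) ^ i - 1)
      = ∏ i ∈ Ioc 0 k, ((p : ℤ) ^ (s + i) - 1) := by
  induction s with
  | zero =>
    intro k
    simp [gaussN]
  | succ s ih =>
    intro k
    rw [gaussN]
    push_cast
    rw [Finset.sum_mul]
    have hsplit : ∀ j ∈ Finset.range (k + 1),
        (p : ℤ) ^ j * (gaussN p s j : ℤ) * ∏ i ∈ Ioc 0 k, ((p : ℤ) ^ i - 1)
          = (p : ℤ) ^ j * (∏ i ∈ Ioc 0 j, ((p : ℤ) ^ (s + i) - 1))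
            * ∏ i ∈ Ioc j k, ((p : ℤ) ^ i - 1) := by
      intro j hj
      rw [Finset.mem_range] at hj
      have hA : ∏ i ∈ Ioc 0 k, ((p : ℤ) ^ i - 1)
          = (∏ i ∈ Ioc 0 j, ((p : ℤ) ^ i - 1)) * ∏ i ∈ Ioc j k, ((p : ℤ) ^ i - 1) :=
        (Finset.prod_Ioc_consecutive _ (Nat.zero_le j) (Nat.lt_succ_iff.mp hj)).symm
      rw [hA]
      linear_combination ((p : ℤ) ^ j * ∏ i ∈ Ioc j k, ((p : ℤ) ^ i - 1)) * ih j
    rw [Finset.sum_congr rfl hsplit, keyT]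

end Assemble


/-- `a_n(ℤ^r)`: the number of subgroups of index `n` in `ℤ^r`. -/
noncomputable def subCount (r n : ℕ) : ℕ :=
  Nat.card {H : AddSubgroup (Fin r → ℤ) // H.index = n}

/-- **Lemma 3.1**: for a prime `p`, the number of subgroups of index `p^k` in `ℤ^r` equals the
Gaussian binomial coefficient `binom(r−1+k,k)_q` evaluated at `q = p`; equivalently (clearing
denominators in `binom(r−1+k,k)_p = Π_{i=1}^k (p^{r−1+i}−1)/(p^i−1)`),
`a_{p^k}(ℤ^r) · Π_{i=1}^k (p^i − 1) = Π_{i=1}^k (p^{r−1+i} − 1)`. -/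
theorem subgroup_count_eq_gaussian_binomial (p : ℕ) (hp : p.Prime) (r k : ℕ) (hr : 0 < r) :
    subCount r (p ^ k) * ∏ i ∈ Finset.Icc 1 k, (p ^ i - 1) =
      ∏ i ∈ Finset.Icc 1 k, (p ^ (r - 1 + i) - 1) := by
  obtain ⟨s, rfl⟩ : ∃ s, r = s + 1 := ⟨r - 1, by omega⟩
  have hcount : subCount (s + 1) (p ^ k) = gaussN p s k := (main_count p hp s k).2
  have hIcc : Finset.Icc 1 k = Finset.Ioc 0 k := rfl
  have hone : ∀ i : ℕ, 0 < i → 1 ≤ p ^ i := fun i _ => Nat.one_le_pow i p hp.pos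
  have hZ := gaussN_identity p hp s k
  rw [hcount, hIcc]
  have hcast1 : ((∏ i ∈ Finset.Ioc 0 k, (p ^ i - 1) : ℕ) : ℤ)
      = ∏ i ∈ Finset.Ioc 0 k, ((p : ℤ) ^ i - 1) := by
    rw [Nat.cast_prod]
    refine Finset.prod_congr rfl fun i hi => ?_
    rw [Finset.mem_Ioc] at hi
    rw [Nat.cast_sub (hone i hi.1)]
    push_cast
    ring
  have hcast2 : ((∏ i ∈ Finset.Ioc 0 k, (p ^ (s + 1 - 1 + i) - 1) : ℕ) : ℤ)
      = ∏ i ∈ Finset.Ioc 0 k, ((p : ℤ) ^ (s + i) - 1) := by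
    rw [Nat.cast_prod]
    refine Finset.prod_congr rfl fun i hi => ?_
    rw [Nat.cast_sub (Nat.one_le_pow _ p hp.pos)]
    have : s + 1 - 1 + i = s + i := by omega
    rw [this]
    push_cast
    ring
  have : ((gaussN p s k * ∏ i ∈ Finset.Ioc 0 k, (p ^ i - 1) : ℕ) : ℤ)
      = ((∏ i ∈ Finset.Ioc 0 k, (p ^ (s + 1 - 1 + i) - 1) : ℕ) : ℤ) := by
    rw [Nat.cast_mul, hcast1, hcast2, hZ]
  exact_mod_cast this
end
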